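/- Let θ ≥ 0, r, s > 0 with r + s > 4, and suppose f : X → Y satisfies f(0) = 0 and ‖f(nx+y) + f(nx−y) − n²f(x+y) − n²f(x−y) − 2f(nx) + 2n²f(x) + 2(n²−1)f(y)‖ ≤ θ‖x‖^r‖y‖^s for all x, y ∈ X. Then there exist a unique quadratic function Q : X → Y and a unique quartic function T : X → Y and a constant K (depending on n, r, s, θ) such that ‖f(x) − Q(x) − T(x)‖ ≤ K‖x‖^{r+s} for all x ∈ X. -/

import Mathlib

open Filter

set_option maxHeartbeats 1000000

section Aux
set_option linter.unusedSectionVars false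

variable {X Y : Type*} [NormedAddCommGroup X] [NormedSpace ℝ X]
  [NormedAddCommGroup Y] [NormedSpace ℝ Y]

/-- quadratic defect operator -/
def stmtDq (f : X → Y) (x y : X) : Y :=
  f (x + y) + f (x - y) - (2:ℝ) • f x - (2:ℝ) • f y

/-- the n-equation defect operator -/
def stmtE (f : X → Y) (ν : ℝ) (x y : X) : Y :=
  f (ν • x + y) + f (ν • x - y) - ν ^ 2 • f (x + y) - ν ^ 2 • f (x - y)
    - (2:ℝ) • f (ν • x) + (2 * ν ^ 2) • f x + (2 * (ν ^ 2 - 1)) • f y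

/-- first-slot quadratic defect of Dq -/
def stmtS (f : X → Y) (x z w : X) : Y :=
  stmtDq f (x + z) w + stmtDq f (x - z) w - (2:ℝ) • stmtDq f x w - (2:ℝ) • stmtDq f z w

/-- quartic defect operator -/
def stmtQu (f : X → Y) (x y : X) : Y :=
  f ((2:ℝ) • x + y) + f ((2:ℝ) • x - y) - (4:ℝ) • f (x + y) - (4:ℝ) • f (x - y)
    - (24:ℝ) • f x + (6:ℝ) • f y

variable {f : X → Y} {ν : ℝ}

theorem stmt_hD1 (x y : X) :
    stmtDq f (ν • x) y - ν ^ 2 • stmtDq f x y = stmtE f ν x y := by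
  simp only [stmtDq, stmtE]; module

theorem stmt_fsub (heven : ∀ t : X, f (-t) = f t) (a b : X) : f (a - b) = f (b - a) := by
  rw [← heven (b - a), neg_sub]

theorem stmt_hDsym (heven : ∀ t : X, f (-t) = f t) (x y : X) :
    stmtDq f x y = stmtDq f y x := by
  simp only [stmtDq]
  rw [stmt_fsub heven x y, add_comm x y]
  module

theorem stmt_hD2 (heven : ∀ t : X, f (-t) = f t) (x y : X) :
    stmtDq f x (ν • y) = ν ^ 2 • stmtDq f x y + stmtE f ν y x := by
  rw [stmt_hDsym heven x (ν • y), stmt_hDsym heven x y, ← stmt_hD1]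
  module

theorem stmt_Ssym12 (heven : ∀ t : X, f (-t) = f t) (x z w : X) :
    stmtS f x z w = stmtS f z x w := by
  simp only [stmtS, stmtDq]
  rw [show z + x = x + z from add_comm z x,
    show z - x + w = -(x - z - w) from by abel, heven,
    show z - x - w = -(x - z + w) from by abel, heven,
    stmt_fsub heven z x]
  module

theorem stmt_Ssym23 (heven : ∀ t : X, f (-t) = f t) (x z w : X) :
    stmtS f x z w = stmtS f x w z := by
  simp only [stmtS, stmtDq]
  rw [show x + w + z = x + z + w from by abel,
    show x + w - z = x - z + w from by abel,
    show x - w + z = x + z - w from by abel,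
    show x - w - z = x - z - w from by abel,
    show w + z = z + w from add_comm w z,
    stmt_fsub heven w z]
  module


theorem stmt_D0 (heven : ∀ t : X, f (-t) = f t) (h0 : f 0 = 0) (w : X) :
    stmtDq f 0 w = 0 := by
  simp only [stmtDq, zero_add, zero_sub, heven, h0]
  module

theorem stmt_Sxxw (heven : ∀ t : X, f (-t) = f t) (h0 : f 0 = 0) (x w : X) :
    stmtS f x x w = stmtDq f ((2:ℝ) • x) w - (4:ℝ) • stmtDq f x w := by
  simp only [stmtS]
  rw [sub_self, stmt_D0 heven h0, ← two_smul ℝ x]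
  module

theorem stmt_hS3 (heven : ∀ t : X, f (-t) = f t) (x z w : X) :
    stmtS f x z (ν • w) = ν ^ 2 • stmtS f x z w +
      (stmtE f ν w (x + z) + stmtE f ν w (x - z)
        - (2:ℝ) • stmtE f ν w x - (2:ℝ) • stmtE f ν w z) := by
  simp only [stmtS]
  rw [stmt_hD2 heven (x + z) w, stmt_hD2 heven (x - z) w, stmt_hD2 heven x w,
    stmt_hD2 heven z w]
  module

theorem stmt_hSdiag (heven : ∀ t : X, f (-t) = f t) (h0 : f 0 = 0) (x w : X) :
    stmtS f (ν • x) (ν • x) w - ν ^ 2 • stmtS f x x w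
      = stmtE f ν ((2:ℝ) • x) w - (4:ℝ) • stmtE f ν x w := by
  rw [stmt_Sxxw heven h0, stmt_Sxxw heven h0, smul_comm (2:ℝ) ν x,
    ← stmt_hD1 ((2:ℝ) • x) w, ← stmt_hD1 x w]
  module

theorem stmt_QuId (heven : ∀ t : X, f (-t) = f t) (h0 : f 0 = 0) (x y : X) :
    stmtQu f x y = stmtS f x x y + (2:ℝ) • stmtDq f x x - (24:ℝ) • f x := by
  rw [stmt_Sxxw heven h0]
  simp only [stmtQu, stmtDq]
  rw [← two_smul ℝ x]
  simp only [sub_self, h0]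
  module


variable {θ r s : ℝ}

theorem stmt_Ebnd (hθ : 0 ≤ θ) (hr : 0 < r) (hs : 0 < s)
    (hE : ∀ x y : X, ‖stmtE f ν x y‖ ≤ θ * ‖x‖ ^ r * ‖y‖ ^ s)
    {a b : X} {A B M : ℝ} (hA : 0 ≤ A) (hB : 0 ≤ B) (hM : 0 ≤ M)
    (ha : ‖a‖ ≤ A * M) (hb : ‖b‖ ≤ B * M) :
    ‖stmtE f ν a b‖ ≤ θ * (A ^ r * B ^ s) * M ^ (r + s) := by
  have h1 : ‖a‖ ^ r ≤ (A * M) ^ r := Real.rpow_le_rpow (norm_nonneg a) ha hr.le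
  have h2 : ‖b‖ ^ s ≤ (B * M) ^ s := Real.rpow_le_rpow (norm_nonneg b) hb hs.le
  calc ‖stmtE f ν a b‖ ≤ θ * ‖a‖ ^ r * ‖b‖ ^ s := hE a b
    _ ≤ θ * (A * M) ^ r * (B * M) ^ s := by
        have := Real.rpow_nonneg (norm_nonneg a) r
        have := Real.rpow_nonneg (norm_nonneg b) s
        have := Real.rpow_nonneg (mul_nonneg hA hM) r
        nlinarith [mul_le_mul h1 h2 (Real.rpow_nonneg (norm_nonneg b) s)
          (Real.rpow_nonneg (mul_nonneg hA hM) r)]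
    _ = θ * (A ^ r * B ^ s) * M ^ (r + s) := by
        rw [Real.mul_rpow hA hM, Real.mul_rpow hB hM,
          Real.rpow_add' hM (by positivity)]
        ring



theorem stmt_ncomb (a b c d : Y) : ‖a + b - (2:ℝ) • c - (2:ℝ) • d‖
    ≤ ‖a‖ + ‖b‖ + 2 * ‖c‖ + 2 * ‖d‖ := by
  have h1 : ‖a + b - (2:ℝ) • c - (2:ℝ) • d‖ ≤ ‖a + b - (2:ℝ) • c‖ + ‖(2:ℝ) • d‖ :=
    norm_sub_le _ _
  have h2 : ‖a + b - (2:ℝ) • c‖ ≤ ‖a + b‖ + ‖(2:ℝ) • c‖ := norm_sub_le _ _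
  have h3 : ‖a + b‖ ≤ ‖a‖ + ‖b‖ := norm_add_le _ _
  have h4 : ‖(2:ℝ) • c‖ = 2 * ‖c‖ := by rw [norm_smul]; norm_num
  have h5 : ‖(2:ℝ) • d‖ = 2 * ‖d‖ := by rw [norm_smul]; norm_num
  linarith

theorem stmt_ncomb2 (a b c d : Y) (k : ℝ) (hk : 0 ≤ k) :
    ‖a - (4:ℝ) • b - k • c - d‖ ≤ ‖a‖ + 4 * ‖b‖ + k * ‖c‖ + ‖d‖ := by
  have h1 : ‖a - (4:ℝ) • b - k • c - d‖ ≤ ‖a - (4:ℝ) • b - k • c‖ + ‖d‖ := norm_sub_le _ _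
  have h2 : ‖a - (4:ℝ) • b - k • c‖ ≤ ‖a - (4:ℝ) • b‖ + ‖k • c‖ := norm_sub_le _ _
  have h3 : ‖a - (4:ℝ) • b‖ ≤ ‖a‖ + ‖(4:ℝ) • b‖ := norm_sub_le _ _
  have h4 : ‖(4:ℝ) • b‖ = 4 * ‖b‖ := by rw [norm_smul]; norm_num
  have h5 : ‖k • c‖ = k * ‖c‖ := by rw [norm_smul, Real.norm_eq_abs, abs_of_nonneg hk]
  linarith

theorem stmt_hSxx (hν : ν ^ 4 - ν ^ 2 ≠ 0) (heven : ∀ t : X, f (-t) = f t) (h0 : f 0 = 0)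
    (hθ : 0 ≤ θ) (hr : 0 < r) (hs : 0 < s)
    (hE : ∀ x y : X, ‖stmtE f ν x y‖ ≤ θ * ‖x‖ ^ r * ‖y‖ ^ s) :
    ∃ C : ℝ, 0 ≤ C ∧ ∀ x w : X, ‖stmtS f x x w‖ ≤ C * (‖x‖ + ‖w‖) ^ (r + s) := by
  classical
  set κ : ℝ := 1 + |ν| with hκ
  have hκ0 : (0:ℝ) ≤ κ := by positivity
  refine ⟨|(ν ^ 4 - ν ^ 2)⁻¹| * (θ * ((2:ℝ) ^ r * 1 ^ s) + 4 * (θ * (1 ^ r * 1 ^ s))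
      + ν ^ 2 * (θ * (1 ^ r * 1 ^ s) + θ * (1 ^ r * 1 ^ s) + 2 * (θ * (1 ^ r * 1 ^ s))
        + 2 * (θ * (1 ^ r * 1 ^ s)))
      + (θ * (1 ^ r * κ ^ s) + θ * (1 ^ r * κ ^ s) + 2 * (θ * (1 ^ r * 1 ^ s))
        + 2 * (θ * (1 ^ r * |ν| ^ s)))), by positivity, ?_⟩
  intro x w
  set ES2 : Y := stmtE f ν x (w + x) + stmtE f ν x (w - x)
      - (2:ℝ) • stmtE f ν x w - (2:ℝ) • stmtE f ν x x with hES2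
  set ES1 : Y := stmtE f ν x (w + ν • x) + stmtE f ν x (w - ν • x)
      - (2:ℝ) • stmtE f ν x w - (2:ℝ) • stmtE f ν x (ν • x) with hES1
  have e1 : stmtS f (ν • x) (ν • x) w
      = ν ^ 4 • stmtS f x x w + (ν ^ 2 • ES2 + ES1) := by
    rw [show stmtS f (ν • x) (ν • x) w = stmtS f w (ν • x) (ν • x) from by
      rw [stmt_Ssym23 heven, stmt_Ssym12 heven]]
    rw [stmt_hS3 heven w (ν • x) x]
    rw [show stmtS f w (ν • x) x = stmtS f w x (ν • x) from stmt_Ssym23 heven w (ν • x) x]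
    rw [stmt_hS3 heven w x x]
    rw [show stmtS f w x x = stmtS f x x w from by
      rw [stmt_Ssym12 heven, stmt_Ssym23 heven]]
    rw [hES1, hES2]
    module
  have key : (ν ^ 4 - ν ^ 2) • stmtS f x x w
      = (stmtE f ν ((2:ℝ) • x) w - (4:ℝ) • stmtE f ν x w) - ν ^ 2 • ES2 - ES1 := by
    have h6 := stmt_hSdiag (ν := ν) heven h0 x w
    rw [e1] at h6
    calc (ν ^ 4 - ν ^ 2) • stmtS f x x w
        = (ν ^ 4 • stmtS f x x w + (ν ^ 2 • ES2 + ES1) - ν ^ 2 • stmtS f x x w)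
            - ν ^ 2 • ES2 - ES1 := by module
      _ = (stmtE f ν ((2:ℝ) • x) w - (4:ℝ) • stmtE f ν x w) - ν ^ 2 • ES2 - ES1 := by
          rw [h6]
  have hSval : stmtS f x x w = (ν ^ 4 - ν ^ 2)⁻¹
      • ((stmtE f ν ((2:ℝ) • x) w - (4:ℝ) • stmtE f ν x w) - ν ^ 2 • ES2 - ES1) := by
    rw [← key, inv_smul_smul₀ hν]
  set M : ℝ := ‖x‖ + ‖w‖ with hM
  have hM0 : 0 ≤ M := by positivity
  have hnw : (0:ℝ) ≤ ‖w‖ := norm_nonneg w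
  have hnx : (0:ℝ) ≤ ‖x‖ := norm_nonneg x
  have hx1 : ‖x‖ ≤ 1 * M := by rw [one_mul, hM]; linarith
  have hw1 : ‖w‖ ≤ 1 * M := by rw [one_mul, hM]; linarith
  have hwpx : ‖w + x‖ ≤ 1 * M := (norm_add_le w x).trans (by rw [one_mul, hM]; linarith)
  have hwmx : ‖w - x‖ ≤ 1 * M := (norm_sub_le w x).trans (by rw [one_mul, hM]; linarith)
  have hnvx : ‖ν • x‖ = |ν| * ‖x‖ := by rw [norm_smul, Real.norm_eq_abs]
  have h2x : ‖(2:ℝ) • x‖ ≤ 2 * M := by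
    rw [norm_smul]; rw [one_mul] at hx1
    calc ‖(2:ℝ)‖ * ‖x‖ = 2 * ‖x‖ := by norm_num
      _ ≤ 2 * M := by linarith
  have hvx : ‖ν • x‖ ≤ |ν| * M := by
    rw [hnvx]; rw [one_mul] at hx1; exact mul_le_mul_of_nonneg_left hx1 (abs_nonneg ν)
  have hwpvx : ‖w + ν • x‖ ≤ κ * M := by
    refine (norm_add_le w _).trans ?_
    rw [hnvx, hκ]; rw [one_mul] at hx1 hw1
    nlinarith [abs_nonneg ν]
  have hwmvx : ‖w - ν • x‖ ≤ κ * M := by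
    refine (norm_sub_le w _).trans ?_
    rw [hnvx, hκ]; rw [one_mul] at hx1 hw1
    nlinarith [abs_nonneg ν]
  have one1 : (0:ℝ) ≤ 1 := zero_le_one
  have b1 := stmt_Ebnd hθ hr hs hE (by norm_num) one1 hM0 h2x hw1
  have b2 := stmt_Ebnd hθ hr hs hE one1 one1 hM0 hx1 hw1
  have b3 := stmt_Ebnd hθ hr hs hE one1 one1 hM0 hx1 hx1
  have b4 := stmt_Ebnd hθ hr hs hE one1 one1 hM0 hx1 hwpx
  have b5 := stmt_Ebnd hθ hr hs hE one1 one1 hM0 hx1 hwmx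
  have b6 := stmt_Ebnd hθ hr hs hE one1 hκ0 hM0 hx1 hwpvx
  have b7 := stmt_Ebnd hθ hr hs hE one1 hκ0 hM0 hx1 hwmvx
  have b8 := stmt_Ebnd hθ hr hs hE one1 (abs_nonneg ν) hM0 hx1 hvx
  have nES2 : ‖ES2‖ ≤ (θ * (1 ^ r * 1 ^ s) + θ * (1 ^ r * 1 ^ s) + 2 * (θ * (1 ^ r * 1 ^ s))
      + 2 * (θ * (1 ^ r * 1 ^ s))) * M ^ (r + s) := by
    rw [hES2]
    refine (stmt_ncomb _ _ _ _).trans ?_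
    rw [show (θ * (1 ^ r * 1 ^ s) + θ * (1 ^ r * 1 ^ s) + 2 * (θ * (1 ^ r * 1 ^ s))
      + 2 * (θ * (1 ^ r * 1 ^ s))) * M ^ (r + s)
      = θ * (1 ^ r * 1 ^ s) * M ^ (r + s) + θ * (1 ^ r * 1 ^ s) * M ^ (r + s)
      + 2 * (θ * (1 ^ r * 1 ^ s) * M ^ (r + s))
      + 2 * (θ * (1 ^ r * 1 ^ s) * M ^ (r + s)) from by ring]
    gcongr
  have nES1 : ‖ES1‖ ≤ (θ * (1 ^ r * κ ^ s) + θ * (1 ^ r * κ ^ s) + 2 * (θ * (1 ^ r * 1 ^ s))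
      + 2 * (θ * (1 ^ r * |ν| ^ s))) * M ^ (r + s) := by
    rw [hES1]
    refine (stmt_ncomb _ _ _ _).trans ?_
    rw [show (θ * (1 ^ r * κ ^ s) + θ * (1 ^ r * κ ^ s) + 2 * (θ * (1 ^ r * 1 ^ s))
      + 2 * (θ * (1 ^ r * |ν| ^ s))) * M ^ (r + s)
      = θ * (1 ^ r * κ ^ s) * M ^ (r + s) + θ * (1 ^ r * κ ^ s) * M ^ (r + s)
      + 2 * (θ * (1 ^ r * 1 ^ s) * M ^ (r + s))
      + 2 * (θ * (1 ^ r * |ν| ^ s) * M ^ (r + s)) from by ring]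
    gcongr
  have hv : ‖stmtE f ν ((2:ℝ) • x) w - (4:ℝ) • stmtE f ν x w - ν ^ 2 • ES2 - ES1‖
      ≤ (θ * ((2:ℝ) ^ r * 1 ^ s) + 4 * (θ * (1 ^ r * 1 ^ s))
      + ν ^ 2 * (θ * (1 ^ r * 1 ^ s) + θ * (1 ^ r * 1 ^ s) + 2 * (θ * (1 ^ r * 1 ^ s))
        + 2 * (θ * (1 ^ r * 1 ^ s)))
      + (θ * (1 ^ r * κ ^ s) + θ * (1 ^ r * κ ^ s) + 2 * (θ * (1 ^ r * 1 ^ s))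
        + 2 * (θ * (1 ^ r * |ν| ^ s)))) * M ^ (r + s) := by
    refine (stmt_ncomb2 _ _ _ _ (ν ^ 2) (by positivity)).trans ?_
    have hm2 : ν ^ 2 * ‖ES2‖ ≤ ν ^ 2 * ((θ * (1 ^ r * 1 ^ s) + θ * (1 ^ r * 1 ^ s)
        + 2 * (θ * (1 ^ r * 1 ^ s)) + 2 * (θ * (1 ^ r * 1 ^ s))) * M ^ (r + s)) :=
      mul_le_mul_of_nonneg_left nES2 (by positivity)
    rw [show (θ * ((2:ℝ) ^ r * 1 ^ s) + 4 * (θ * (1 ^ r * 1 ^ s))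
      + ν ^ 2 * (θ * (1 ^ r * 1 ^ s) + θ * (1 ^ r * 1 ^ s) + 2 * (θ * (1 ^ r * 1 ^ s))
        + 2 * (θ * (1 ^ r * 1 ^ s)))
      + (θ * (1 ^ r * κ ^ s) + θ * (1 ^ r * κ ^ s) + 2 * (θ * (1 ^ r * 1 ^ s))
        + 2 * (θ * (1 ^ r * |ν| ^ s)))) * M ^ (r + s)
      = θ * ((2:ℝ) ^ r * 1 ^ s) * M ^ (r + s) + 4 * (θ * (1 ^ r * 1 ^ s) * M ^ (r + s))
      + ν ^ 2 * ((θ * (1 ^ r * 1 ^ s) + θ * (1 ^ r * 1 ^ s) + 2 * (θ * (1 ^ r * 1 ^ s))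
        + 2 * (θ * (1 ^ r * 1 ^ s))) * M ^ (r + s))
      + (θ * (1 ^ r * κ ^ s) + θ * (1 ^ r * κ ^ s) + 2 * (θ * (1 ^ r * 1 ^ s))
        + 2 * (θ * (1 ^ r * |ν| ^ s))) * M ^ (r + s) from by ring]
    linarith [b1, b2, nES1]
  calc ‖stmtS f x x w‖ = |(ν ^ 4 - ν ^ 2)⁻¹|
      * ‖stmtE f ν ((2:ℝ) • x) w - (4:ℝ) • stmtE f ν x w - ν ^ 2 • ES2 - ES1‖ := by
        rw [hSval, norm_smul, Real.norm_eq_abs]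
    _ ≤ _ := by
        rw [mul_assoc]
        exact mul_le_mul_of_nonneg_left hv (abs_nonneg _)


theorem stmt_L8 (hr : 0 < r) (hs : 0 < s) (heven : ∀ t : X, f (-t) = f t) (h0 : f 0 = 0)
    {C₀ : ℝ} (hC₀ : 0 ≤ C₀)
    (hS : ∀ x w : X, ‖stmtS f x x w‖ ≤ C₀ * (‖x‖ + ‖w‖) ^ (r + s)) :
    ∀ j : ℕ, ∃ C : ℝ, 0 ≤ C ∧ ∀ x : X,
      ‖stmtDq f ((j:ℝ) • x) x - ((j:ℝ) ^ 2) • stmtDq f x x‖ ≤ C * ‖x‖ ^ (r + s) := by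
  have base0 : ∃ C : ℝ, 0 ≤ C ∧ ∀ x : X,
      ‖stmtDq f (((0:ℕ):ℝ) • x) x - (((0:ℕ):ℝ) ^ 2) • stmtDq f x x‖ ≤ C * ‖x‖ ^ (r + s) := by
    refine ⟨0, le_refl _, fun x => ?_⟩
    simp only [Nat.cast_zero, zero_smul, stmt_D0 heven h0, ne_eq, OfNat.ofNat_ne_zero,
      not_false_eq_true, zero_pow, sub_zero, norm_zero, zero_mul, le_refl]
  have base1 : ∃ C : ℝ, 0 ≤ C ∧ ∀ x : X,
      ‖stmtDq f (((1:ℕ):ℝ) • x) x - (((1:ℕ):ℝ) ^ 2) • stmtDq f x x‖ ≤ C * ‖x‖ ^ (r + s) := by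
    refine ⟨0, le_refl _, fun x => ?_⟩
    simp only [Nat.cast_one, one_smul, one_pow, sub_self, norm_zero, zero_mul, le_refl]
  have main : ∀ j : ℕ, (∃ C : ℝ, 0 ≤ C ∧ ∀ x : X,
      ‖stmtDq f ((j:ℝ) • x) x - ((j:ℝ) ^ 2) • stmtDq f x x‖ ≤ C * ‖x‖ ^ (r + s)) ∧
      (∃ C : ℝ, 0 ≤ C ∧ ∀ x : X,
      ‖stmtDq f (((j+1:ℕ):ℝ) • x) x - (((j+1:ℕ):ℝ) ^ 2) • stmtDq f x x‖
        ≤ C * ‖x‖ ^ (r + s)) := by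
    intro j
    induction j with
    | zero => exact ⟨base0, base1⟩
    | succ k ih =>
      refine ⟨ih.2, ?_⟩
      obtain ⟨Ck, hCk, hk⟩ := ih.1
      obtain ⟨Ck1, hCk1, hk1⟩ := ih.2
      refine ⟨C₀ * ((k:ℝ) + 3) ^ (r + s) + Ck + 2 * Ck1, by positivity, fun x => ?_⟩
      have hid : stmtDq f (((k+2:ℕ):ℝ) • x) x - (((k+2:ℕ):ℝ) ^ 2) • stmtDq f x x
          = stmtS f (((k:ℝ)+1) • x) x x
            - (stmtDq f ((k:ℝ) • x) x - ((k:ℝ) ^ 2) • stmtDq f x x)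
            + (2:ℝ) • (stmtDq f (((k+1:ℕ):ℝ) • x) x - (((k+1:ℕ):ℝ) ^ 2) • stmtDq f x x) := by
        push_cast
        simp only [stmtS]
        rw [show ((k:ℝ)+1) • x + x = ((k:ℝ)+2) • x from by module,
          show ((k:ℝ)+1) • x - x = (k:ℝ) • x from by module]
        module
      rw [hid]
      have hSb : ‖stmtS f (((k:ℝ)+1) • x) x x‖ ≤ C₀ * ((k:ℝ) + 3) ^ (r + s) * ‖x‖ ^ (r + s) := by
        have hsym : stmtS f (((k:ℝ)+1) • x) x x = stmtS f x x (((k:ℝ)+1) • x) := by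
          rw [stmt_Ssym12 heven, stmt_Ssym23 heven]
        rw [hsym]
        refine (hS x (((k:ℝ)+1) • x)).trans ?_
        have h1 : ‖x‖ + ‖((k:ℝ)+1) • x‖ = ((k:ℝ) + 2) * ‖x‖ := by
          rw [norm_smul, Real.norm_eq_abs, abs_of_nonneg (by positivity)]
          ring
        rw [h1]
        have h2 : (((k:ℝ) + 2) * ‖x‖) ^ (r + s) = ((k:ℝ)+2) ^ (r+s) * ‖x‖ ^ (r+s) :=
          Real.mul_rpow (by positivity) (norm_nonneg x)
        rw [h2, ← mul_assoc]
        have h3 : ((k:ℝ)+2) ^ (r+s) ≤ ((k:ℝ)+3) ^ (r+s) :=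
          Real.rpow_le_rpow (by positivity) (by linarith) (by linarith)
        have h4 : (0:ℝ) ≤ ‖x‖ ^ (r+s) := Real.rpow_nonneg (norm_nonneg x) _
        exact mul_le_mul_of_nonneg_right (mul_le_mul_of_nonneg_left h3 hC₀) h4
      calc ‖stmtS f (((k:ℝ)+1) • x) x x
            - (stmtDq f ((k:ℝ) • x) x - ((k:ℝ) ^ 2) • stmtDq f x x)
            + (2:ℝ) • (stmtDq f (((k+1:ℕ):ℝ) • x) x - (((k+1:ℕ):ℝ) ^ 2) • stmtDq f x x)‖
          ≤ ‖stmtS f (((k:ℝ)+1) • x) x x‖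
            + ‖stmtDq f ((k:ℝ) • x) x - ((k:ℝ) ^ 2) • stmtDq f x x‖
            + 2 * ‖stmtDq f (((k+1:ℕ):ℝ) • x) x - (((k+1:ℕ):ℝ) ^ 2) • stmtDq f x x‖ := by
            refine (norm_add_le _ _).trans ?_
            have := norm_sub_le (stmtS f (((k:ℝ)+1) • x) x x)
              (stmtDq f ((k:ℝ) • x) x - ((k:ℝ) ^ 2) • stmtDq f x x)
            have h2 : ‖(2:ℝ) • (stmtDq f (((k+1:ℕ):ℝ) • x) x
                - (((k+1:ℕ):ℝ) ^ 2) • stmtDq f x x)‖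
                = 2 * ‖stmtDq f (((k+1:ℕ):ℝ) • x) x - (((k+1:ℕ):ℝ) ^ 2) • stmtDq f x x‖ := by
              rw [norm_smul]; norm_num
            linarith
        _ ≤ C₀ * ((k:ℝ) + 3) ^ (r + s) * ‖x‖ ^ (r + s) + Ck * ‖x‖ ^ (r+s)
            + 2 * (Ck1 * ‖x‖ ^ (r+s)) := by
            have := hk x
            have := hk1 x
            linarith [hSb]
        _ = (C₀ * ((k:ℝ) + 3) ^ (r + s) + Ck + 2 * Ck1) * ‖x‖ ^ (r + s) := by ring
  exact fun j => (main j).1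

theorem stmt_L9 (hr : 0 < r) (hs : 0 < s) (heven : ∀ t : X, f (-t) = f t) (h0 : f 0 = 0)
    {C₀ : ℝ} (hC₀ : 0 ≤ C₀)
    (hS : ∀ x w : X, ‖stmtS f x x w‖ ≤ C₀ * (‖x‖ + ‖w‖) ^ (r + s)) :
    ∀ j : ℕ, ∃ C : ℝ, 0 ≤ C ∧ ∀ x : X,
      ‖f ((j:ℝ) • x) - ((j:ℝ) ^ 2) • f x
        - (((j:ℝ) ^ 4 - (j:ℝ) ^ 2) / 12) • stmtDq f x x‖ ≤ C * ‖x‖ ^ (r + s) := by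
  have hL8 := stmt_L8 hr hs heven h0 hC₀ hS
  have base0 : ∃ C : ℝ, 0 ≤ C ∧ ∀ x : X,
      ‖f (((0:ℕ):ℝ) • x) - (((0:ℕ):ℝ) ^ 2) • f x
        - ((((0:ℕ):ℝ) ^ 4 - ((0:ℕ):ℝ) ^ 2) / 12) • stmtDq f x x‖ ≤ C * ‖x‖ ^ (r + s) := by
    refine ⟨0, le_refl _, fun x => ?_⟩
    norm_num [h0]
  have base1 : ∃ C : ℝ, 0 ≤ C ∧ ∀ x : X,
      ‖f (((1:ℕ):ℝ) • x) - (((1:ℕ):ℝ) ^ 2) • f x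
        - ((((1:ℕ):ℝ) ^ 4 - ((1:ℕ):ℝ) ^ 2) / 12) • stmtDq f x x‖ ≤ C * ‖x‖ ^ (r + s) := by
    refine ⟨0, le_refl _, fun x => ?_⟩
    norm_num
  have main : ∀ j : ℕ, (∃ C : ℝ, 0 ≤ C ∧ ∀ x : X,
      ‖f ((j:ℝ) • x) - ((j:ℝ) ^ 2) • f x
        - (((j:ℝ) ^ 4 - (j:ℝ) ^ 2) / 12) • stmtDq f x x‖ ≤ C * ‖x‖ ^ (r + s)) ∧
      (∃ C : ℝ, 0 ≤ C ∧ ∀ x : X,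
      ‖f (((j+1:ℕ):ℝ) • x) - (((j+1:ℕ):ℝ) ^ 2) • f x
        - ((((j+1:ℕ):ℝ) ^ 4 - ((j+1:ℕ):ℝ) ^ 2) / 12) • stmtDq f x x‖
          ≤ C * ‖x‖ ^ (r + s)) := by
    intro j
    induction j with
    | zero => exact ⟨base0, base1⟩
    | succ k ih =>
      refine ⟨ih.2, ?_⟩
      obtain ⟨Ck, hCk, hk⟩ := ih.1
      obtain ⟨Ck1, hCk1, hk1⟩ := ih.2
      obtain ⟨Cd, hCd, hd⟩ := hL8 (k+1)
      refine ⟨Cd + Ck + 2 * Ck1, by positivity, fun x => ?_⟩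
      have hid : f (((k+2:ℕ):ℝ) • x) - (((k+2:ℕ):ℝ) ^ 2) • f x
          - ((((k+2:ℕ):ℝ) ^ 4 - ((k+2:ℕ):ℝ) ^ 2) / 12) • stmtDq f x x
          = (stmtDq f (((k+1:ℕ):ℝ) • x) x - (((k+1:ℕ):ℝ) ^ 2) • stmtDq f x x)
            - (f ((k:ℝ) • x) - ((k:ℝ) ^ 2) • f x
              - (((k:ℝ) ^ 4 - (k:ℝ) ^ 2) / 12) • stmtDq f x x)
            + (2:ℝ) • (f (((k+1:ℕ):ℝ) • x) - (((k+1:ℕ):ℝ) ^ 2) • f x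
              - ((((k+1:ℕ):ℝ) ^ 4 - ((k+1:ℕ):ℝ) ^ 2) / 12) • stmtDq f x x) := by
        push_cast
        simp only [stmtDq]
        rw [show ((k:ℝ)+1) • x + x = ((k:ℝ)+2) • x from by module,
          show ((k:ℝ)+1) • x - x = (k:ℝ) • x from by module]
        match_scalars <;> ring
      rw [hid]
      have n2 : ‖(2:ℝ) • (f (((k+1:ℕ):ℝ) • x) - (((k+1:ℕ):ℝ) ^ 2) • f x
          - ((((k+1:ℕ):ℝ) ^ 4 - ((k+1:ℕ):ℝ) ^ 2) / 12) • stmtDq f x x)‖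
          = 2 * ‖f (((k+1:ℕ):ℝ) • x) - (((k+1:ℕ):ℝ) ^ 2) • f x
          - ((((k+1:ℕ):ℝ) ^ 4 - ((k+1:ℕ):ℝ) ^ 2) / 12) • stmtDq f x x‖ := by
        rw [norm_smul]; norm_num
      calc _ ≤ ‖(stmtDq f (((k+1:ℕ):ℝ) • x) x - (((k+1:ℕ):ℝ) ^ 2) • stmtDq f x x)
            - (f ((k:ℝ) • x) - ((k:ℝ) ^ 2) • f x
              - (((k:ℝ) ^ 4 - (k:ℝ) ^ 2) / 12) • stmtDq f x x)‖
            + ‖(2:ℝ) • (f (((k+1:ℕ):ℝ) • x) - (((k+1:ℕ):ℝ) ^ 2) • f x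
              - ((((k+1:ℕ):ℝ) ^ 4 - ((k+1:ℕ):ℝ) ^ 2) / 12) • stmtDq f x x)‖ :=
          norm_add_le _ _
        _ ≤ (Cd + Ck + 2 * Ck1) * ‖x‖ ^ (r + s) := by
          rw [n2]
          have h1 := hd x
          have h2 := hk x
          have h3 := hk1 x
          have h4 := norm_sub_le (stmtDq f (((k+1:ℕ):ℝ) • x) x
            - (((k+1:ℕ):ℝ) ^ 2) • stmtDq f x x)
            (f ((k:ℝ) • x) - ((k:ℝ) ^ 2) • f x
              - (((k:ℝ) ^ 4 - (k:ℝ) ^ 2) / 12) • stmtDq f x x)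
          push_cast at h1 h2 h3 h4 ⊢
          linarith
  exact fun j => (main j).1

theorem stmt_L10 (hr : 0 < r) (hs : 0 < s) (heven : ∀ t : X, f (-t) = f t) (h0 : f 0 = 0)
    {C₀ : ℝ} (hC₀ : 0 ≤ C₀)
    (hS : ∀ x w : X, ‖stmtS f x x w‖ ≤ C₀ * (‖x‖ + ‖w‖) ^ (r + s))
    (m : ℕ) (hm : ((m:ℝ) = ν ∨ (m:ℝ) = -ν)) :
    ∃ C : ℝ, 0 ≤ C ∧ ∀ x : X,
      ‖(ν ^ 4 - ν ^ 2) • stmtDq f x x - (12:ℝ) • (f (ν • x) - ν ^ 2 • f x)‖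
        ≤ C * ‖x‖ ^ (r + s) := by
  obtain ⟨C, hC, h⟩ := stmt_L9 hr hs heven h0 hC₀ hS m
  refine ⟨12 * C, by positivity, fun x => ?_⟩
  have hfm : f ((m:ℝ) • x) = f (ν • x) := by
    rcases hm with h' | h'
    · rw [h']
    · rw [h', neg_smul, heven]
  have h2 : ((m:ℝ)) ^ 2 = ν ^ 2 := by rcases hm with h' | h' <;> rw [h'] <;> ring
  have h4 : ((m:ℝ)) ^ 4 = ν ^ 4 := by rcases hm with h' | h' <;> rw [h'] <;> ring
  have e : (ν ^ 4 - ν ^ 2) • stmtDq f x x - (12:ℝ) • (f (ν • x) - ν ^ 2 • f x)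
      = (-12:ℝ) • (f ((m:ℝ) • x) - ((m:ℝ) ^ 2) • f x
        - (((m:ℝ) ^ 4 - (m:ℝ) ^ 2) / 12) • stmtDq f x x) := by
    rw [hfm, h2, h4]; module
  rw [e, norm_smul]
  have := h x
  rw [Real.norm_eq_abs]
  norm_num
  linarith [this]

theorem stmt_L11 (hr : 0 < r) (hs : 0 < s) (hθ : 0 ≤ θ) (heven : ∀ t : X, f (-t) = f t)
    (h0 : f 0 = 0)
    (hE : ∀ x y : X, ‖stmtE f ν x y‖ ≤ θ * ‖x‖ ^ r * ‖y‖ ^ s)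
    {Cβ : ℝ} (hCβ : 0 ≤ Cβ)
    (hβ : ∀ x : X, ‖(ν ^ 4 - ν ^ 2) • stmtDq f x x - (12:ℝ) • (f (ν • x) - ν ^ 2 • f x)‖
        ≤ Cβ * ‖x‖ ^ (r + s)) :
    ∃ C : ℝ, 0 ≤ C ∧ ∀ x : X,
      ‖f (ν • ν • x) - (ν ^ 2 + ν ^ 4) • f (ν • x) + (ν ^ 6) • f x‖ ≤ C * ‖x‖ ^ (r + s) := by
  refine ⟨(Cβ * |ν| ^ (r + s) + |ν ^ 4 - ν ^ 2| * (ν ^ 2 * (θ * (1 ^ r * 1 ^ s))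
      + θ * (1 ^ r * |ν| ^ s)) + ν ^ 4 * Cβ) / 12, by positivity, fun x => ?_⟩
  have hDnn : stmtDq f (ν • x) (ν • x) - ν ^ 4 • stmtDq f x x
      = ν ^ 2 • stmtE f ν x x + stmtE f ν x (ν • x) := by
    have e1 := stmt_hD1 (f := f) (ν := ν) x (ν • x)
    have e2 := stmt_hD2 (ν := ν) heven x x
    calc stmtDq f (ν • x) (ν • x) - ν ^ 4 • stmtDq f x x
        = (stmtDq f (ν • x) (ν • x) - ν ^ 2 • stmtDq f x (ν • x))
          + ν ^ 2 • (stmtDq f x (ν • x) - ν ^ 2 • stmtDq f x x) := by module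
      _ = stmtE f ν x (ν • x) + ν ^ 2 • (ν ^ 2 • stmtDq f x x + stmtE f ν x x
            - ν ^ 2 • stmtDq f x x) := by rw [e1, e2]
      _ = ν ^ 2 • stmtE f ν x x + stmtE f ν x (ν • x) := by module
  have hid : (12:ℝ) • (f (ν • ν • x) - (ν ^ 2 + ν ^ 4) • f (ν • x) + (ν ^ 6) • f x)
      = (-1:ℝ) • ((ν ^ 4 - ν ^ 2) • stmtDq f (ν • x) (ν • x)
          - (12:ℝ) • (f (ν • ν • x) - ν ^ 2 • f (ν • x)))
        + (ν ^ 4 - ν ^ 2) • (ν ^ 2 • stmtE f ν x x + stmtE f ν x (ν • x))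
        + ν ^ 4 • ((ν ^ 4 - ν ^ 2) • stmtDq f x x - (12:ℝ) • (f (ν • x) - ν ^ 2 • f x)) := by
    rw [← hDnn]; module
  have hn1 : ‖x‖ ≤ 1 * ‖x‖ := by rw [one_mul]
  have hn2 : ‖ν • x‖ ≤ |ν| * ‖x‖ := by rw [norm_smul, Real.norm_eq_abs]
  have b1 := stmt_Ebnd hθ hr hs hE zero_le_one zero_le_one (norm_nonneg x) hn1 hn1
  have b2 := stmt_Ebnd hθ hr hs hE zero_le_one (abs_nonneg ν) (norm_nonneg x) hn1 hn2
  have bβ1 := hβ (ν • x)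
  have bβ2 := hβ x
  have hnvp : ‖ν • x‖ ^ (r + s) ≤ |ν| ^ (r + s) * ‖x‖ ^ (r + s) := by
    rw [← Real.mul_rpow (abs_nonneg ν) (norm_nonneg x)]
    exact Real.rpow_le_rpow (norm_nonneg _) hn2 (by linarith)
  have hE2 : ‖(ν ^ 4 - ν ^ 2) • (ν ^ 2 • stmtE f ν x x + stmtE f ν x (ν • x))‖
      ≤ |ν ^ 4 - ν ^ 2| * (ν ^ 2 * (θ * (1 ^ r * 1 ^ s))
        + θ * (1 ^ r * |ν| ^ s)) * ‖x‖ ^ (r + s) := by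
    rw [norm_smul, Real.norm_eq_abs]
    have h1 : ‖ν ^ 2 • stmtE f ν x x + stmtE f ν x (ν • x)‖
        ≤ ν ^ 2 * ‖stmtE f ν x x‖ + ‖stmtE f ν x (ν • x)‖ := by
      refine (norm_add_le _ _).trans ?_
      rw [norm_smul, Real.norm_eq_abs, abs_of_nonneg (by positivity : (0:ℝ) ≤ ν ^ 2)]
    have h2 : ν ^ 2 * ‖stmtE f ν x x‖ ≤ ν ^ 2 * (θ * (1 ^ r * 1 ^ s) * ‖x‖ ^ (r + s)) :=
      mul_le_mul_of_nonneg_left b1 (by positivity)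
    have h3 : ‖ν ^ 2 • stmtE f ν x x + stmtE f ν x (ν • x)‖
        ≤ (ν ^ 2 * (θ * (1 ^ r * 1 ^ s)) + θ * (1 ^ r * |ν| ^ s)) * ‖x‖ ^ (r + s) := by
      rw [show (ν ^ 2 * (θ * (1 ^ r * 1 ^ s)) + θ * (1 ^ r * |ν| ^ s)) * ‖x‖ ^ (r + s)
        = ν ^ 2 * (θ * (1 ^ r * 1 ^ s) * ‖x‖ ^ (r + s))
          + θ * (1 ^ r * |ν| ^ s) * ‖x‖ ^ (r + s) from by ring]
      linarith [b2]
    rw [mul_assoc]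
    exact mul_le_mul_of_nonneg_left h3 (abs_nonneg _)
  have h12 : ‖(12:ℝ) • (f (ν • ν • x) - (ν ^ 2 + ν ^ 4) • f (ν • x) + (ν ^ 6) • f x)‖
      = 12 * ‖f (ν • ν • x) - (ν ^ 2 + ν ^ 4) • f (ν • x) + (ν ^ 6) • f x‖ := by
    rw [norm_smul]; norm_num
  have hT1 : ‖(-1:ℝ) • ((ν ^ 4 - ν ^ 2) • stmtDq f (ν • x) (ν • x)
      - (12:ℝ) • (f (ν • ν • x) - ν ^ 2 • f (ν • x)))‖
      ≤ Cβ * (|ν| ^ (r + s) * ‖x‖ ^ (r + s)) := by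
    rw [norm_smul]
    norm_num
    exact bβ1.trans (mul_le_mul_of_nonneg_left hnvp hCβ)
  have hT3 : ‖ν ^ 4 • ((ν ^ 4 - ν ^ 2) • stmtDq f x x
      - (12:ℝ) • (f (ν • x) - ν ^ 2 • f x))‖ ≤ ν ^ 4 * (Cβ * ‖x‖ ^ (r + s)) := by
    rw [norm_smul, Real.norm_eq_abs, abs_of_nonneg (by positivity : (0:ℝ) ≤ ν ^ 4)]
    exact mul_le_mul_of_nonneg_left bβ2 (by positivity)
  have htri : ‖(-1:ℝ) • ((ν ^ 4 - ν ^ 2) • stmtDq f (ν • x) (ν • x)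
        - (12:ℝ) • (f (ν • ν • x) - ν ^ 2 • f (ν • x)))
      + (ν ^ 4 - ν ^ 2) • (ν ^ 2 • stmtE f ν x x + stmtE f ν x (ν • x))
      + ν ^ 4 • ((ν ^ 4 - ν ^ 2) • stmtDq f x x - (12:ℝ) • (f (ν • x) - ν ^ 2 • f x))‖
      ≤ Cβ * (|ν| ^ (r + s) * ‖x‖ ^ (r + s))
        + |ν ^ 4 - ν ^ 2| * (ν ^ 2 * (θ * (1 ^ r * 1 ^ s)) + θ * (1 ^ r * |ν| ^ s))
          * ‖x‖ ^ (r + s)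
        + ν ^ 4 * (Cβ * ‖x‖ ^ (r + s)) := by
    refine (norm_add_le _ _).trans ?_
    have := norm_add_le ((-1:ℝ) • ((ν ^ 4 - ν ^ 2) • stmtDq f (ν • x) (ν • x)
        - (12:ℝ) • (f (ν • ν • x) - ν ^ 2 • f (ν • x))))
      ((ν ^ 4 - ν ^ 2) • (ν ^ 2 • stmtE f ν x x + stmtE f ν x (ν • x)))
    linarith [hT1, hE2, hT3]
  have final := hid ▸ htri
  rw [h12] at final
  linarith [final]

/-- approximate quadratic part -/
noncomputable def stmtq (f : X → Y) (ν : ℝ) : X → Y :=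
  fun x => (ν ^ 2 - ν ^ 4)⁻¹ • (f (ν • x) - ν ^ 4 • f x)

/-- approximate quartic part -/
noncomputable def stmtt (f : X → Y) (ν : ℝ) : X → Y :=
  fun x => (ν ^ 4 - ν ^ 2)⁻¹ • (f (ν • x) - ν ^ 2 • f x)

theorem stmt_qt_add (hν : ν ^ 4 - ν ^ 2 ≠ 0) (x : X) :
    stmtq f ν x + stmtt f ν x = f x := by
  simp only [stmtq, stmtt]
  have hν' : ν ^ 2 - ν ^ 4 ≠ 0 := fun h => hν (by linarith [sub_eq_zero.mp h])
  have hν0 : ν ≠ 0 := by rintro rfl; norm_num at hν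
  have hν1 : 1 - ν ^ 2 ≠ 0 := fun h => hν (by linear_combination (-ν ^ 2) * h)
  have hν2 : -1 + ν ^ 2 ≠ 0 := fun h => hν (by linear_combination (ν ^ 2) * h)
  match_scalars <;> field_simp <;> (first | ring1 | linear_combination (mul_inv_cancel₀ hν2) | linear_combination -(mul_inv_cancel₀ hν2) | linear_combination 24 * (mul_inv_cancel₀ hν2) | linear_combination -24 * (mul_inv_cancel₀ hν2))

theorem stmt_Dqq (heven : ∀ t : X, f (-t) = f t) (x y : X) :
    stmtDq (stmtq f ν) x y
      = (ν ^ 2 - ν ^ 4)⁻¹ • (ν ^ 2 • stmtE f ν y x + stmtE f ν x (ν • y)) := by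
  have e0 : stmtDq (stmtq f ν) x y = (ν ^ 2 - ν ^ 4)⁻¹
      • (stmtDq f (ν • x) (ν • y) - ν ^ 4 • stmtDq f x y) := by
    simp only [stmtDq, stmtq, smul_add, smul_sub]
    module
  rw [e0]
  congr 1
  have e1 := stmt_hD1 (f := f) (ν := ν) x (ν • y)
  have e2 := stmt_hD2 (ν := ν) heven x y
  calc stmtDq f (ν • x) (ν • y) - ν ^ 4 • stmtDq f x y
      = (stmtDq f (ν • x) (ν • y) - ν ^ 2 • stmtDq f x (ν • y))
        + ν ^ 2 • (stmtDq f x (ν • y) - ν ^ 2 • stmtDq f x y) := by module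
    _ = stmtE f ν x (ν • y) + ν ^ 2 • (ν ^ 2 • stmtDq f x y + stmtE f ν y x
          - ν ^ 2 • stmtDq f x y) := by rw [e1, e2]
    _ = ν ^ 2 • stmtE f ν y x + stmtE f ν x (ν • y) := by module

theorem stmt_Dqq_bnd (hr : 0 < r) (hs : 0 < s) (hθ : 0 ≤ θ)
    (heven : ∀ t : X, f (-t) = f t)
    (hE : ∀ x y : X, ‖stmtE f ν x y‖ ≤ θ * ‖x‖ ^ r * ‖y‖ ^ s) :
    ∃ C : ℝ, 0 ≤ C ∧ ∀ x y : X,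
      ‖stmtDq (stmtq f ν) x y‖ ≤ C * (‖x‖ + ‖y‖) ^ (r + s) := by
  refine ⟨|(ν ^ 2 - ν ^ 4)⁻¹| * (ν ^ 2 * (θ * (1 ^ r * 1 ^ s)) + θ * (1 ^ r * |ν| ^ s)),
    by positivity, fun x y => ?_⟩
  rw [stmt_Dqq heven, norm_smul, Real.norm_eq_abs]
  set M : ℝ := ‖x‖ + ‖y‖ with hM
  have hM0 : (0:ℝ) ≤ M := by positivity
  have hx1 : ‖x‖ ≤ 1 * M := by rw [one_mul, hM]; linarith [norm_nonneg y]
  have hy1 : ‖y‖ ≤ 1 * M := by rw [one_mul, hM]; linarith [norm_nonneg x]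
  have hvy : ‖ν • y‖ ≤ |ν| * M := by
    rw [norm_smul, Real.norm_eq_abs]
    rw [one_mul] at hy1
    exact mul_le_mul_of_nonneg_left hy1 (abs_nonneg ν)
  have b1 := stmt_Ebnd hθ hr hs hE zero_le_one zero_le_one hM0 hy1 hx1
  have b2 := stmt_Ebnd hθ hr hs hE zero_le_one (abs_nonneg ν) hM0 hx1 hvy
  have h1 : ‖ν ^ 2 • stmtE f ν y x + stmtE f ν x (ν • y)‖
      ≤ (ν ^ 2 * (θ * (1 ^ r * 1 ^ s)) + θ * (1 ^ r * |ν| ^ s)) * M ^ (r + s) := by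
    refine (norm_add_le _ _).trans ?_
    rw [norm_smul, Real.norm_eq_abs, abs_of_nonneg (by positivity : (0:ℝ) ≤ ν ^ 2)]
    rw [show (ν ^ 2 * (θ * (1 ^ r * 1 ^ s)) + θ * (1 ^ r * |ν| ^ s)) * M ^ (r + s)
      = ν ^ 2 * (θ * (1 ^ r * 1 ^ s) * M ^ (r + s))
        + θ * (1 ^ r * |ν| ^ s) * M ^ (r + s) from by ring]
    have := mul_le_mul_of_nonneg_left b1 (by positivity : (0:ℝ) ≤ ν ^ 2)
    linarith [b2]
  rw [mul_assoc]
  exact mul_le_mul_of_nonneg_left h1 (abs_nonneg _)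

theorem stmt_q_rec (h0 : f 0 = 0) (x : X) :
    stmtq f ν ((2:ℝ) • x) - (4:ℝ) • stmtq f ν x = stmtDq (stmtq f ν) x x := by
  have hq0 : stmtq f ν 0 = 0 := by simp [stmtq, h0]
  simp only [stmtDq]
  rw [← two_smul ℝ x, sub_self, hq0]
  module

theorem stmt_Quv (heven : ∀ t : X, f (-t) = f t) (x y : X) :
    stmtQu (stmtt f ν) x y = (ν ^ 4 - ν ^ 2)⁻¹
      • (stmtQu f (ν • x) (ν • y) - ν ^ 2 • stmtQu f x y) := by
  simp only [stmtQu, stmtt, smul_add, smul_sub]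
  rw [smul_comm ν (2:ℝ) x]
  module

theorem stmt_hQf (hr : 0 < r) (hs : 0 < s) (heven : ∀ t : X, f (-t) = f t) (h0 : f 0 = 0)
    (hν : ν ^ 4 - ν ^ 2 ≠ 0)
    {C₀ Cβ : ℝ} (hC₀ : 0 ≤ C₀) (hCβ : 0 ≤ Cβ)
    (hS : ∀ x w : X, ‖stmtS f x x w‖ ≤ C₀ * (‖x‖ + ‖w‖) ^ (r + s))
    (hβ : ∀ x : X, ‖(ν ^ 4 - ν ^ 2) • stmtDq f x x - (12:ℝ) • (f (ν • x) - ν ^ 2 • f x)‖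
        ≤ Cβ * ‖x‖ ^ (r + s)) :
    ∀ x y : X, ‖stmtQu f x y + (24:ℝ) • stmtq f ν x‖
      ≤ (C₀ + |2 * (ν ^ 4 - ν ^ 2)⁻¹| * Cβ) * (‖x‖ + ‖y‖) ^ (r + s) := by
  intro x y
  have hid : stmtQu f x y + (24:ℝ) • stmtq f ν x
      = stmtS f x x y + (2 * (ν ^ 4 - ν ^ 2)⁻¹)
        • ((ν ^ 4 - ν ^ 2) • stmtDq f x x - (12:ℝ) • (f (ν • x) - ν ^ 2 • f x)) := by
    rw [stmt_QuId heven h0]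
    simp only [stmtq]
    have hν' : ν ^ 2 - ν ^ 4 ≠ 0 := fun h => hν (by linarith [sub_eq_zero.mp h])
    have hν0 : ν ≠ 0 := by rintro rfl; norm_num at hν
    have hν1 : 1 - ν ^ 2 ≠ 0 := fun h => hν (by linear_combination (-ν ^ 2) * h)
    have hν2 : -1 + ν ^ 2 ≠ 0 := fun h => hν (by linear_combination (ν ^ 2) * h)
    have hν3 : -ν + ν ^ 3 ≠ 0 := fun h => hν (by linear_combination ν * h)
    match_scalars <;> field_simp [hν'] <;> (first | ring1 | linear_combination (mul_inv_cancel₀ hν2) | linear_combination -(mul_inv_cancel₀ hν2) | linear_combination 24 * (mul_inv_cancel₀ hν2) | linear_combination -24 * (mul_inv_cancel₀ hν2))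
  rw [hid]
  have hM0 : (0:ℝ) ≤ ‖x‖ + ‖y‖ := by positivity
  have hxM : ‖x‖ ^ (r + s) ≤ (‖x‖ + ‖y‖) ^ (r + s) :=
    Real.rpow_le_rpow (norm_nonneg x) (by linarith [norm_nonneg y]) (by linarith)
  refine (norm_add_le _ _).trans ?_
  have h1 := hS x y
  have h2 : ‖(2 * (ν ^ 4 - ν ^ 2)⁻¹)
      • ((ν ^ 4 - ν ^ 2) • stmtDq f x x - (12:ℝ) • (f (ν • x) - ν ^ 2 • f x))‖
      ≤ |2 * (ν ^ 4 - ν ^ 2)⁻¹| * Cβ * (‖x‖ + ‖y‖) ^ (r + s) := by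
    rw [norm_smul, Real.norm_eq_abs, mul_assoc]
    refine mul_le_mul_of_nonneg_left ?_ (abs_nonneg _)
    exact (hβ x).trans (mul_le_mul_of_nonneg_left hxM hCβ)
  rw [show (C₀ + |2 * (ν ^ 4 - ν ^ 2)⁻¹| * Cβ) * (‖x‖ + ‖y‖) ^ (r + s)
    = C₀ * (‖x‖ + ‖y‖) ^ (r + s)
      + |2 * (ν ^ 4 - ν ^ 2)⁻¹| * Cβ * (‖x‖ + ‖y‖) ^ (r + s) from by ring]
  linarith

theorem stmt_Qut_bnd (hr : 0 < r) (hs : 0 < s) (heven : ∀ t : X, f (-t) = f t)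
    (hν : ν ^ 4 - ν ^ 2 ≠ 0)
    {CQ CΦ : ℝ} (hCQ : 0 ≤ CQ) (hCΦ : 0 ≤ CΦ)
    (hQ : ∀ x y : X, ‖stmtQu f x y + (24:ℝ) • stmtq f ν x‖ ≤ CQ * (‖x‖ + ‖y‖) ^ (r + s))
    (hΦ : ∀ x : X, ‖f (ν • ν • x) - (ν ^ 2 + ν ^ 4) • f (ν • x) + (ν ^ 6) • f x‖
        ≤ CΦ * ‖x‖ ^ (r + s)) :
    ∃ C : ℝ, 0 ≤ C ∧ ∀ x y : X,
      ‖stmtQu (stmtt f ν) x y‖ ≤ C * (‖x‖ + ‖y‖) ^ (r + s) := by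
  refine ⟨|(ν ^ 4 - ν ^ 2)⁻¹| * (CQ * |ν| ^ (r + s) + ν ^ 2 * CQ
    + 24 * (|(ν ^ 2 - ν ^ 4)⁻¹| * CΦ)), by positivity, fun x y => ?_⟩
  set M : ℝ := ‖x‖ + ‖y‖ with hM
  have hM0 : (0:ℝ) ≤ M := by positivity
  have hqd : stmtq f ν (ν • x) - ν ^ 2 • stmtq f ν x
      = (ν ^ 2 - ν ^ 4)⁻¹ • (f (ν • ν • x) - (ν ^ 2 + ν ^ 4) • f (ν • x) + (ν ^ 6) • f x) := by
    simp only [stmtq]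
    match_scalars <;> ring
  have hid : stmtQu f (ν • x) (ν • y) - ν ^ 2 • stmtQu f x y
      = (stmtQu f (ν • x) (ν • y) + (24:ℝ) • stmtq f ν (ν • x))
        - ν ^ 2 • (stmtQu f x y + (24:ℝ) • stmtq f ν x)
        - (24:ℝ) • (stmtq f ν (ν • x) - ν ^ 2 • stmtq f ν x) := by module
  rw [stmt_Quv heven, norm_smul, Real.norm_eq_abs, hid, hqd]
  have b1 := hQ (ν • x) (ν • y)
  have e1 : ‖ν • x‖ + ‖ν • y‖ = |ν| * M := by
    rw [norm_smul, norm_smul, Real.norm_eq_abs, hM]; ring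
  rw [e1] at b1
  have e2 : (|ν| * M) ^ (r + s) = |ν| ^ (r + s) * M ^ (r + s) :=
    Real.mul_rpow (abs_nonneg ν) hM0
  rw [e2] at b1
  have b2 := hQ x y
  have b3 : ‖(24:ℝ) • ((ν ^ 2 - ν ^ 4)⁻¹
      • (f (ν • ν • x) - (ν ^ 2 + ν ^ 4) • f (ν • x) + (ν ^ 6) • f x))‖
      ≤ 24 * (|(ν ^ 2 - ν ^ 4)⁻¹| * CΦ) * M ^ (r + s) := by
    rw [norm_smul, norm_smul, Real.norm_eq_abs, Real.norm_eq_abs]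
    have hxM : ‖x‖ ^ (r + s) ≤ M ^ (r + s) :=
      Real.rpow_le_rpow (norm_nonneg x) (by rw [hM]; linarith [norm_nonneg y]) (by linarith)
    have := (hΦ x).trans (mul_le_mul_of_nonneg_left hxM hCΦ)
    calc |(24:ℝ)| * (|(ν ^ 2 - ν ^ 4)⁻¹|
        * ‖f (ν • ν • x) - (ν ^ 2 + ν ^ 4) • f (ν • x) + (ν ^ 6) • f x‖)
        ≤ |(24:ℝ)| * (|(ν ^ 2 - ν ^ 4)⁻¹| * (CΦ * M ^ (r + s))) := by
          refine mul_le_mul_of_nonneg_left ?_ (abs_nonneg _)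
          exact mul_le_mul_of_nonneg_left this (abs_nonneg _)
      _ = 24 * (|(ν ^ 2 - ν ^ 4)⁻¹| * CΦ) * M ^ (r + s) := by
          rw [abs_of_nonneg (by norm_num : (0:ℝ) ≤ (24:ℝ))]; ring
  have btri : ‖(stmtQu f (ν • x) (ν • y) + (24:ℝ) • stmtq f ν (ν • x))
        - ν ^ 2 • (stmtQu f x y + (24:ℝ) • stmtq f ν x)
        - (24:ℝ) • ((ν ^ 2 - ν ^ 4)⁻¹
          • (f (ν • ν • x) - (ν ^ 2 + ν ^ 4) • f (ν • x) + (ν ^ 6) • f x))‖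
      ≤ (CQ * |ν| ^ (r + s) + ν ^ 2 * CQ + 24 * (|(ν ^ 2 - ν ^ 4)⁻¹| * CΦ)) * M ^ (r + s) := by
    have t1 := norm_sub_le ((stmtQu f (ν • x) (ν • y) + (24:ℝ) • stmtq f ν (ν • x))
        - ν ^ 2 • (stmtQu f x y + (24:ℝ) • stmtq f ν x))
      ((24:ℝ) • ((ν ^ 2 - ν ^ 4)⁻¹
        • (f (ν • ν • x) - (ν ^ 2 + ν ^ 4) • f (ν • x) + (ν ^ 6) • f x)))
    have t2 := norm_sub_le (stmtQu f (ν • x) (ν • y) + (24:ℝ) • stmtq f ν (ν • x))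
      (ν ^ 2 • (stmtQu f x y + (24:ℝ) • stmtq f ν x))
    have t3 : ‖ν ^ 2 • (stmtQu f x y + (24:ℝ) • stmtq f ν x)‖
        ≤ ν ^ 2 * (CQ * M ^ (r + s)) := by
      rw [norm_smul, Real.norm_eq_abs, abs_of_nonneg (by positivity : (0:ℝ) ≤ ν ^ 2)]
      exact mul_le_mul_of_nonneg_left b2 (by positivity)
    rw [show (CQ * |ν| ^ (r + s) + ν ^ 2 * CQ + 24 * (|(ν ^ 2 - ν ^ 4)⁻¹| * CΦ)) * M ^ (r + s)
      = CQ * (|ν| ^ (r + s) * M ^ (r + s)) + ν ^ 2 * (CQ * M ^ (r + s))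
        + 24 * (|(ν ^ 2 - ν ^ 4)⁻¹| * CΦ) * M ^ (r + s) from by ring]
    linarith [b1, b3]
  rw [mul_assoc]
  exact mul_le_mul_of_nonneg_left btri (abs_nonneg _)

theorem stmt_t_rec (h0 : f 0 = 0) {CT : ℝ} (hCT : 0 ≤ CT)
    (hQt : ∀ x y : X, ‖stmtQu (stmtt f ν) x y‖ ≤ CT * (‖x‖ + ‖y‖) ^ (r + s)) (x : X) :
    ‖stmtt f ν ((2:ℝ) • x) - (16:ℝ) • stmtt f ν x‖ ≤ (2:ℝ)⁻¹ * CT * ‖x‖ ^ (r + s) := by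
  have ht0 : stmtt f ν 0 = 0 := by simp [stmtt, h0]
  have hid : stmtt f ν ((2:ℝ) • x) - (16:ℝ) • stmtt f ν x
      = (2⁻¹:ℝ) • stmtQu (stmtt f ν) x 0 := by
    simp only [stmtQu, add_zero, sub_zero, ht0]
    module
  rw [hid, norm_smul, Real.norm_eq_abs]
  have := hQt x 0
  rw [norm_zero, add_zero] at this
  rw [abs_of_nonneg (by norm_num : (0:ℝ) ≤ (2⁻¹:ℝ))]
  calc (2⁻¹:ℝ) * ‖stmtQu (stmtt f ν) x 0‖ ≤ 2⁻¹ * (CT * ‖x‖ ^ (r + s)) :=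
        mul_le_mul_of_nonneg_left this (by norm_num)
    _ = 2⁻¹ * CT * ‖x‖ ^ (r + s) := by ring

theorem stmt_hyers [CompleteSpace Y] {p lam c : ℝ} (hlam : 0 < lam) (hc : 0 ≤ c)
    (hp : lam < (2:ℝ) ^ p) (g : X → Y)
    (hg : ∀ x : X, ‖g ((2:ℝ) • x) - lam • g x‖ ≤ c * ‖x‖ ^ p) :
    ∃ G : X → Y,
      (∀ x, Filter.Tendsto (fun k : ℕ => lam ^ k • g (((2:ℝ) ^ k)⁻¹ • x))
        Filter.atTop (nhds (G x))) ∧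
      (∀ x, ‖g x - G x‖ ≤ c / ((2:ℝ) ^ p - lam) * ‖x‖ ^ p) := by
  have h2p : (0:ℝ) < (2:ℝ) ^ p := Real.rpow_pos_of_pos (by norm_num) p
  set ρ : ℝ := lam / (2:ℝ) ^ p with hρ
  have hρ1 : ρ < 1 := (div_lt_one h2p).mpr hp
  have hρ0 : 0 ≤ ρ := by positivity
  have hpow : ∀ k : ℕ, (((2:ℝ) ^ k)⁻¹ : ℝ) ^ p = (((2:ℝ) ^ p) ^ k)⁻¹ := by
    intro k
    have h1 : (((2:ℝ) ^ k)⁻¹ : ℝ) ^ p = (2:ℝ) ^ (-(k:ℝ) * p) := by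
      rw [← Real.rpow_natCast (2:ℝ) k, ← Real.rpow_neg (by norm_num),
        ← Real.rpow_mul (by norm_num)]
    have h2 : ((((2:ℝ) ^ p) ^ k)⁻¹ : ℝ) = (2:ℝ) ^ (-(p * (k:ℝ))) := by
      rw [← Real.rpow_natCast ((2:ℝ) ^ p) k, ← Real.rpow_mul (by norm_num),
        Real.rpow_neg (by norm_num)]
    rw [h1, h2]; ring_nf
  have hseq : ∀ x : X, ∀ k : ℕ,
      dist (lam ^ k • g (((2:ℝ) ^ k)⁻¹ • x)) (lam ^ (k+1) • g (((2:ℝ) ^ (k+1))⁻¹ • x))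
        ≤ (c * ‖x‖ ^ p / (2:ℝ) ^ p) * ρ ^ k := by
    intro x k
    have hyid : ((2:ℝ) ^ (k+1))⁻¹ • x = (2:ℝ)⁻¹ • (((2:ℝ) ^ k)⁻¹ • x) := by
      rw [smul_smul, ← mul_inv, ← pow_succ']
    have hgy : g (((2:ℝ) ^ k)⁻¹ • x) = g ((2:ℝ) • (((2:ℝ) ^ (k+1))⁻¹ • x)) := by
      rw [hyid, smul_smul, smul_smul]
      norm_num
    rw [dist_eq_norm]
    have e1 : lam ^ k • g (((2:ℝ) ^ k)⁻¹ • x) - lam ^ (k+1) • g (((2:ℝ) ^ (k+1))⁻¹ • x)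
        = lam ^ k • (g ((2:ℝ) • (((2:ℝ) ^ (k+1))⁻¹ • x))
          - lam • g (((2:ℝ) ^ (k+1))⁻¹ • x)) := by
      rw [← hgy, smul_sub, smul_smul, ← pow_succ]
    rw [e1, norm_smul, Real.norm_eq_abs, abs_of_nonneg (by positivity : (0:ℝ) ≤ lam ^ k)]
    have hb := hg (((2:ℝ) ^ (k+1))⁻¹ • x)
    have hnn : ‖((2:ℝ) ^ (k+1))⁻¹ • x‖ ^ p = (((2:ℝ) ^ p) ^ (k+1))⁻¹ * ‖x‖ ^ p := by
      rw [norm_smul, Real.norm_eq_abs, abs_of_nonneg (by positivity),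
        Real.mul_rpow (by positivity) (norm_nonneg x), hpow]
    rw [hnn] at hb
    calc lam ^ k * ‖g ((2:ℝ) • (((2:ℝ) ^ (k+1))⁻¹ • x)) - lam • g (((2:ℝ) ^ (k+1))⁻¹ • x)‖
        ≤ lam ^ k * (c * ((((2:ℝ) ^ p) ^ (k+1))⁻¹ * ‖x‖ ^ p)) :=
          mul_le_mul_of_nonneg_left hb (by positivity)
      _ = (c * ‖x‖ ^ p / (2:ℝ) ^ p) * ρ ^ k := by
          rw [hρ]
          field_simp
          have hP : ((2:ℝ)^p)^k * ((2:ℝ)^p)⁻¹^k = 1 := by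
            rw [← mul_pow, mul_inv_cancel₀ h2p.ne', one_pow]
          linear_combination (-(lam ^ k * c * 2 ^ p * ‖x‖ ^ p)) * hP
  have hcauchy : ∀ x : X, CauchySeq (fun k : ℕ => lam ^ k • g (((2:ℝ) ^ k)⁻¹ • x)) :=
    fun x => cauchySeq_of_le_geometric ρ (c * ‖x‖ ^ p / (2:ℝ) ^ p) hρ1 (hseq x)
  choose G hG using fun x => cauchySeq_tendsto_of_complete (hcauchy x)
  refine ⟨G, hG, fun x => ?_⟩
  have hd := dist_le_of_le_geometric_of_tendsto₀ ρ (c * ‖x‖ ^ p / (2:ℝ) ^ p) hρ1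
    (hseq x) (hG x)
  simp only [pow_zero, one_smul, inv_one] at hd
  rw [dist_eq_norm] at hd
  refine hd.trans (le_of_eq ?_)
  have hne : (2:ℝ) ^ p - lam ≠ 0 := ne_of_gt (by linarith)
  have h1 : (1 : ℝ) - ρ = ((2:ℝ) ^ p - lam) / (2:ℝ) ^ p := by
    rw [hρ]; field_simp
  rw [h1]
  field_simp

theorem stmt_pow_inv (p : ℝ) (k : ℕ) :
    ((((2:ℝ) ^ k)⁻¹ : ℝ)) ^ p = (((2:ℝ) ^ p) ^ k)⁻¹ := by
  have h1 : (((2:ℝ) ^ k)⁻¹ : ℝ) ^ p = (2:ℝ) ^ (-(k:ℝ) * p) := by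
    rw [← Real.rpow_natCast (2:ℝ) k, ← Real.rpow_neg (by norm_num),
      ← Real.rpow_mul (by norm_num)]
  have h2 : ((((2:ℝ) ^ p) ^ k)⁻¹ : ℝ) = (2:ℝ) ^ (-(p * (k:ℝ))) := by
    rw [← Real.rpow_natCast ((2:ℝ) ^ p) k, ← Real.rpow_mul (by norm_num),
      Real.rpow_neg (by norm_num)]
  rw [h1, h2]; ring_nf

theorem stmt_quad_scale (g : X → Y)
    (hg : ∀ x y : X, g (x + y) + g (x - y) = (2:ℤ) • g x + (2:ℤ) • g y) :
    ∀ (k : ℕ) (x : X), g (((2:ℝ) ^ k)⁻¹ • x) = (((4:ℝ) ^ k)⁻¹) • g x := by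
  have hcast : ∀ (m : ℤ) (v : Y), (m:ℤ) • v = ((m:ℝ)) • v := by
    intro m v; rw [Int.cast_smul_eq_zsmul ℝ m v]
  have hg' : ∀ x y : X, g (x + y) + g (x - y) = (2:ℝ) • g x + (2:ℝ) • g y := by
    intro x y
    have := hg x y
    rwa [hcast 2 (g x), hcast 2 (g y), Int.cast_two] at this
  have hg0 : g 0 = 0 := by
    have h := hg' 0 0
    simp only [add_zero, sub_zero] at h
    have h2 : (2:ℝ) • g 0 = 0 := by
      calc (2:ℝ) • g 0 = ((2:ℝ) • g 0 + (2:ℝ) • g 0) - (g 0 + g 0) := by module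
        _ = (g 0 + g 0) - (g 0 + g 0) := by rw [← h]
        _ = 0 := by module
    rcases smul_eq_zero.mp h2 with h' | h'
    · norm_num at h'
    · exact h'
  have hdouble : ∀ x : X, g ((2:ℝ) • x) = (4:ℝ) • g x := by
    intro x
    have h := hg' x x
    rw [sub_self, hg0, add_zero, ← two_smul ℝ x] at h
    rw [h]; module
  intro k
  induction k with
  | zero => intro x; simp
  | succ k ih =>
    intro x
    have e1 : ((2:ℝ) ^ (k+1))⁻¹ • x = (2:ℝ)⁻¹ • (((2:ℝ) ^ k)⁻¹ • x) := by
      rw [smul_smul, ← mul_inv, ← pow_succ']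
    have e0 : (2:ℝ) • (((2:ℝ) ^ (k+1))⁻¹ • x) = ((2:ℝ) ^ k)⁻¹ • x := by
      rw [e1, smul_smul]
      norm_num
    have e2 := hdouble (((2:ℝ) ^ (k+1))⁻¹ • x)
    rw [e0, ih x] at e2
    have h3 : g (((2:ℝ) ^ (k+1))⁻¹ • x) = (4:ℝ)⁻¹ • (((4:ℝ) ^ k)⁻¹ • g x) := by
      rw [eq_inv_smul_iff₀ (by norm_num : (4:ℝ) ≠ 0)]
      exact e2.symm
    rw [h3, smul_smul, ← mul_inv, ← pow_succ']

theorem stmt_quart_scale (g : X → Y)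
    (hg : ∀ x y : X, g ((2:ℤ) • x + y) + g ((2:ℤ) • x - y) =
      (4:ℤ) • g (x + y) + (4:ℤ) • g (x - y) + (24:ℤ) • g x - (6:ℤ) • g y) :
    ∀ (k : ℕ) (x : X), g (((2:ℝ) ^ k)⁻¹ • x) = (((16:ℝ) ^ k)⁻¹) • g x := by
  have hcast : ∀ (m : ℤ) (v : Y), (m:ℤ) • v = ((m:ℝ)) • v := by
    intro m v; rw [Int.cast_smul_eq_zsmul ℝ m v]
  have hg' : ∀ x y : X, g ((2:ℤ) • x + y) + g ((2:ℤ) • x - y) =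
      (4:ℝ) • g (x + y) + (4:ℝ) • g (x - y) + (24:ℝ) • g x - (6:ℝ) • g y := by
    intro x y
    have := hg x y
    rw [hcast 4 (g (x+y)), hcast 4 (g (x-y)), hcast 24 (g x), hcast 6 (g y)] at this
    push_cast at this
    exact this
  have hg0 : g 0 = 0 := by
    have h := hg' 0 0
    simp only [smul_zero, add_zero, sub_zero, zero_add] at h
    have h24 : (24:ℝ) • g 0 = 0 := by
      calc (24:ℝ) • g 0
          = ((4:ℝ) • g 0 + (4:ℝ) • g 0 + (24:ℝ) • g 0 - (6:ℝ) • g 0) - (g 0 + g 0) := by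
            module
        _ = (g 0 + g 0) - (g 0 + g 0) := by rw [← h]
        _ = 0 := by module
    rcases smul_eq_zero.mp h24 with h' | h'
    · norm_num at h'
    · exact h'
  have hdouble : ∀ x : X, g ((2:ℝ) • x) = (16:ℝ) • g x := by
    intro x
    have h := hg' x 0
    simp only [add_zero, sub_zero, hg0, smul_zero, sub_self] at h
    rw [show ((2:ℤ) • x : X) = (2:ℝ) • x from by
      rw [← Int.cast_smul_eq_zsmul ℝ (2:ℤ) x]; norm_num] at h
    have h2 : (2:ℝ) • g ((2:ℝ) • x) = (2:ℝ) • ((16:ℝ) • g x) := by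
      calc (2:ℝ) • g ((2:ℝ) • x) = g ((2:ℝ) • x) + g ((2:ℝ) • x) := by module
        _ = (4:ℝ) • g x + (4:ℝ) • g x + (24:ℝ) • g x := h
        _ = (2:ℝ) • ((16:ℝ) • g x) := by module
    exact smul_right_injective Y (by norm_num : (2:ℝ) ≠ 0) h2
  intro k
  induction k with
  | zero => intro x; simp
  | succ k ih =>
    intro x
    have e1 : ((2:ℝ) ^ (k+1))⁻¹ • x = (2:ℝ)⁻¹ • (((2:ℝ) ^ k)⁻¹ • x) := by
      rw [smul_smul, ← mul_inv, ← pow_succ']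
    have e0 : (2:ℝ) • (((2:ℝ) ^ (k+1))⁻¹ • x) = ((2:ℝ) ^ k)⁻¹ • x := by
      rw [e1, smul_smul]
      norm_num
    have e2 := hdouble (((2:ℝ) ^ (k+1))⁻¹ • x)
    rw [e0, ih x] at e2
    have h3 : g (((2:ℝ) ^ (k+1))⁻¹ • x) = (16:ℝ)⁻¹ • (((16:ℝ) ^ k)⁻¹ • g x) := by
      rw [eq_inv_smul_iff₀ (by norm_num : (16:ℝ) ≠ 0)]
      exact e2.symm
    rw [h3, smul_smul, ← mul_inv, ← pow_succ']

end Aux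

theorem stmt_17 {X Y : Type*} [NormedAddCommGroup X] [NormedSpace ℝ X]
    [NormedAddCommGroup Y] [NormedSpace ℝ Y] [CompleteSpace Y]
    (n : ℤ) (hn0 : n ≠ 0) (hn1 : n ≠ 1) (hn2 : n ≠ -1)
    (θ r s : ℝ) (hθ : 0 ≤ θ) (hr : 0 < r) (hs : 0 < s) (hrs : 4 < r + s)
    (f : X → Y) (h0 : f 0 = 0)
    (hf : ∀ x y : X, ‖f (n • x + y) + f (n • x - y) - (n ^ 2) • f (x + y)
        - (n ^ 2) • f (x - y) - (2 : ℤ) • f (n • x) + (2 * n ^ 2) • f x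
        + (2 * (n ^ 2 - 1)) • f y‖ ≤ θ * ‖x‖ ^ r * ‖y‖ ^ s) :
    ∃! QT : (X → Y) × (X → Y),
      (∀ x y : X, QT.1 (x + y) + QT.1 (x - y) = (2 : ℤ) • QT.1 x + (2 : ℤ) • QT.1 y) ∧
      (∀ x y : X, QT.2 ((2 : ℤ) • x + y) + QT.2 ((2 : ℤ) • x - y) =
        (4 : ℤ) • QT.2 (x + y) + (4 : ℤ) • QT.2 (x - y) + (24 : ℤ) • QT.2 x - (6 : ℤ) • QT.2 y) ∧
      (∃ K : ℝ, ∀ x : X, ‖f x - QT.1 x - QT.2 x‖ ≤ K * ‖x‖ ^ (r + s)) := by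
  classical
  set ν : ℝ := (n : ℝ) with hνdef
  -- basic numerics
  have habZ : (2:ℤ) ≤ |n| := by
    have h2 : 2 ≤ n.natAbs := by omega
    rw [Int.abs_eq_natAbs]
    exact_mod_cast h2
  have hab : (2:ℝ) ≤ |ν| := by
    rw [hνdef, ← Int.cast_abs]
    exact_mod_cast habZ
  have hν2 : (4:ℝ) ≤ ν ^ 2 := by nlinarith [sq_abs ν, abs_nonneg ν]
  have hνn : ν ^ 4 - ν ^ 2 ≠ 0 := by nlinarith
  -- defect bound in real form
  have hE : ∀ x y : X, ‖stmtE f ν x y‖ ≤ θ * ‖x‖ ^ r * ‖y‖ ^ s := by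
    intro x y
    have h := hf x y
    simp only [← Int.cast_smul_eq_zsmul ℝ] at h
    push_cast at h
    simpa [stmtE, hνdef] using h
  -- evenness
  have heven : ∀ t : X, f (-t) = f t := by
    intro t
    have h := hE 0 t
    have e : stmtE f ν 0 t = (ν ^ 2 - 1) • (f t - f (-t)) := by
      simp only [stmtE, smul_zero, zero_add, zero_sub, h0]
      module
    rw [e] at h
    rw [norm_zero, Real.zero_rpow hr.ne', mul_zero, zero_mul] at h
    have hz : (ν ^ 2 - 1) • (f t - f (-t)) = 0 := norm_le_zero_iff.mp h
    rcases smul_eq_zero.mp hz with h' | h'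
    · exfalso; nlinarith [h']
    · exact (sub_eq_zero.mp h').symm
  -- core bounds
  obtain ⟨C₀, hC₀, hS⟩ := stmt_hSxx hνn heven h0 hθ hr hs hE
  have hm : ((n.natAbs : ℝ) = ν ∨ (n.natAbs : ℝ) = -ν) := by
    rcases Int.natAbs_eq n with h | h
    · left; rw [hνdef]
      have hzz : ((n.natAbs : ℤ)) = n := h.symm
      calc ((n.natAbs : ℝ)) = (((n.natAbs : ℤ) : ℝ)) := (Int.cast_natCast _).symm
        _ = ((n : ℤ) : ℝ) := by rw [hzz]
    · right; rw [hνdef]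
      have hzz : ((n.natAbs : ℤ)) = -n := by omega
      calc ((n.natAbs : ℝ)) = (((n.natAbs : ℤ) : ℝ)) := (Int.cast_natCast _).symm
        _ = ((-n : ℤ) : ℝ) := by rw [hzz]
        _ = -((n : ℤ) : ℝ) := by push_cast; ring
  obtain ⟨Cβ, hCβ, hβ⟩ := stmt_L10 hr hs heven h0 hC₀ hS n.natAbs hm
  obtain ⟨CΦ, hCΦ, hΦ⟩ := stmt_L11 hr hs hθ heven h0 hE hCβ hβ
  obtain ⟨Cq, hCq, hDqb⟩ := stmt_Dqq_bnd hr hs hθ heven hE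
  have hQfb := stmt_hQf hr hs heven h0 hνn hC₀ hCβ hS hβ
  obtain ⟨CT, hCT, hQt⟩ := stmt_Qut_bnd hr hs heven hνn
    (by positivity : (0:ℝ) ≤ C₀ + |2 * (ν ^ 4 - ν ^ 2)⁻¹| * Cβ) hCΦ hQfb hΦ
  -- recursions
  have hrecq : ∀ x : X, ‖stmtq f ν ((2:ℝ) • x) - (4:ℝ) • stmtq f ν x‖
      ≤ (Cq * (2:ℝ) ^ (r + s)) * ‖x‖ ^ (r + s) := by
    intro x
    rw [stmt_q_rec h0]
    refine (hDqb x x).trans (le_of_eq ?_)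
    rw [show ‖x‖ + ‖x‖ = 2 * ‖x‖ from by ring,
      Real.mul_rpow (by norm_num) (norm_nonneg x)]
    ring
  have hrect : ∀ x : X, ‖stmtt f ν ((2:ℝ) • x) - (16:ℝ) • stmtt f ν x‖
      ≤ ((2:ℝ)⁻¹ * CT) * ‖x‖ ^ (r + s) := fun x => stmt_t_rec h0 hCT hQt x
  -- exponent facts
  have h2p16 : (16:ℝ) < (2:ℝ) ^ (r + s) := by
    have h4 : (2:ℝ) ^ (4:ℝ) < (2:ℝ) ^ (r + s) :=
      (Real.rpow_lt_rpow_left_iff (by norm_num : (1:ℝ) < 2)).mpr hrs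
    rwa [show (2:ℝ) ^ (4:ℝ) = 16 from by
      rw [show (4:ℝ) = ((4:ℕ):ℝ) from by norm_num, Real.rpow_natCast]; norm_num] at h4
  have h2p4 : (4:ℝ) < (2:ℝ) ^ (r + s) := lt_trans (by norm_num) h2p16
  have h2pp : (0:ℝ) < (2:ℝ) ^ (r + s) := Real.rpow_pos_of_pos (by norm_num) _
  -- Hyers limits
  obtain ⟨Q, hQten, hQb⟩ := stmt_hyers (by norm_num : (0:ℝ) < 4) (by positivity) h2p4
    (stmtq f ν) hrecq
  obtain ⟨T, hTten, hTb⟩ := stmt_hyers (by norm_num : (0:ℝ) < 16) (by positivity) h2p16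
    (stmtt f ν) hrect
  -- Q is quadratic
  have hQDq : ∀ x y : X, stmtDq Q x y = 0 := by
    intro x y
    set M : ℝ := ‖x‖ + ‖y‖ with hM
    have hM0 : (0:ℝ) ≤ M := by positivity
    have hcomb : Filter.Tendsto (fun k : ℕ =>
        (4:ℝ) ^ k • stmtDq (stmtq f ν) (((2:ℝ) ^ k)⁻¹ • x) (((2:ℝ) ^ k)⁻¹ • y))
        Filter.atTop (nhds (stmtDq Q x y)) := by
      have e : ∀ k : ℕ, (4:ℝ) ^ k • stmtDq (stmtq f ν) (((2:ℝ) ^ k)⁻¹ • x) (((2:ℝ) ^ k)⁻¹ • y)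
          = ((4:ℝ) ^ k • stmtq f ν (((2:ℝ) ^ k)⁻¹ • (x + y))
            + (4:ℝ) ^ k • stmtq f ν (((2:ℝ) ^ k)⁻¹ • (x - y)))
            - (2:ℝ) • ((4:ℝ) ^ k • stmtq f ν (((2:ℝ) ^ k)⁻¹ • x))
            - (2:ℝ) • ((4:ℝ) ^ k • stmtq f ν (((2:ℝ) ^ k)⁻¹ • y)) := by
        intro k
        simp only [stmtDq, smul_add, smul_sub]
        module
      have t0 := (((hQten (x + y)).add (hQten (x - y))).sub
        ((hQten x).const_smul (2:ℝ))).sub ((hQten y).const_smul (2:ℝ))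
      have e2 : stmtDq Q x y = Q (x + y) + Q (x - y) - (2:ℝ) • Q x - (2:ℝ) • Q y := rfl
      rw [e2]
      exact Filter.Tendsto.congr (fun k => (e k).symm) t0
    have hzero : Filter.Tendsto (fun k : ℕ =>
        (4:ℝ) ^ k • stmtDq (stmtq f ν) (((2:ℝ) ^ k)⁻¹ • x) (((2:ℝ) ^ k)⁻¹ • y))
        Filter.atTop (nhds 0) := by
      apply squeeze_zero_norm (a := fun k : ℕ => (Cq * M ^ (r + s)) * ((4:ℝ) / (2:ℝ) ^ (r + s)) ^ k)
      · intro k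
        have hb := hDqb (((2:ℝ) ^ k)⁻¹ • x) (((2:ℝ) ^ k)⁻¹ • y)
        have hnorms : ‖((2:ℝ) ^ k)⁻¹ • x‖ + ‖((2:ℝ) ^ k)⁻¹ • y‖ = ((2:ℝ) ^ k)⁻¹ * M := by
          rw [norm_smul, norm_smul, Real.norm_eq_abs, abs_of_nonneg (by positivity), hM]
          ring
        rw [hnorms, Real.mul_rpow (by positivity) hM0, stmt_pow_inv] at hb
        rw [norm_smul, Real.norm_eq_abs, abs_of_nonneg (by positivity : (0:ℝ) ≤ (4:ℝ) ^ k)]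
        calc (4:ℝ) ^ k * ‖stmtDq (stmtq f ν) (((2:ℝ) ^ k)⁻¹ • x) (((2:ℝ) ^ k)⁻¹ • y)‖
            ≤ (4:ℝ) ^ k * (Cq * ((((2:ℝ) ^ (r+s)) ^ k)⁻¹ * M ^ (r + s))) :=
              mul_le_mul_of_nonneg_left hb (by positivity)
          _ = (Cq * M ^ (r + s)) * ((4:ℝ) / (2:ℝ) ^ (r + s)) ^ k := by
              rw [div_pow]
              field_simp
      · have hlt : (4:ℝ) / (2:ℝ) ^ (r + s) < 1 := (div_lt_one h2pp).mpr h2p4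
        have := tendsto_pow_atTop_nhds_zero_of_lt_one (by positivity) hlt
        simpa using this.const_mul (Cq * M ^ (r + s))
    exact tendsto_nhds_unique hcomb hzero
  have hQquad : ∀ x y : X, Q (x + y) + Q (x - y) = (2:ℤ) • Q x + (2:ℤ) • Q y := by
    intro x y
    have h := hQDq x y
    rw [Int.cast_smul_eq_zsmul ℝ (2:ℤ) (Q x) |>.symm, Int.cast_smul_eq_zsmul ℝ (2:ℤ) (Q y) |>.symm]
    push_cast
    have e : Q (x + y) + Q (x - y)
        = stmtDq Q x y + (2:ℝ) • Q x + (2:ℝ) • Q y := by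
      simp only [stmtDq]; module
    rw [e, h]; module
  -- T is quartic
  have hTQu : ∀ x y : X, stmtQu T x y = 0 := by
    intro x y
    set M : ℝ := ‖x‖ + ‖y‖ with hM
    have hM0 : (0:ℝ) ≤ M := by positivity
    have hcomb : Filter.Tendsto (fun k : ℕ =>
        (16:ℝ) ^ k • stmtQu (stmtt f ν) (((2:ℝ) ^ k)⁻¹ • x) (((2:ℝ) ^ k)⁻¹ • y))
        Filter.atTop (nhds (stmtQu T x y)) := by
      have e : ∀ k : ℕ, (16:ℝ) ^ k • stmtQu (stmtt f ν) (((2:ℝ) ^ k)⁻¹ • x) (((2:ℝ) ^ k)⁻¹ • y)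
          = (((16:ℝ) ^ k • stmtt f ν (((2:ℝ) ^ k)⁻¹ • ((2:ℝ) • x + y))
            + (16:ℝ) ^ k • stmtt f ν (((2:ℝ) ^ k)⁻¹ • ((2:ℝ) • x - y)))
            - (4:ℝ) • ((16:ℝ) ^ k • stmtt f ν (((2:ℝ) ^ k)⁻¹ • (x + y)))
            - (4:ℝ) • ((16:ℝ) ^ k • stmtt f ν (((2:ℝ) ^ k)⁻¹ • (x - y)))
            - (24:ℝ) • ((16:ℝ) ^ k • stmtt f ν (((2:ℝ) ^ k)⁻¹ • x)))
            + (6:ℝ) • ((16:ℝ) ^ k • stmtt f ν (((2:ℝ) ^ k)⁻¹ • y)) := by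
        intro k
        simp only [stmtQu, smul_add, smul_sub]
        rw [smul_comm (((2:ℝ) ^ k)⁻¹) (2:ℝ) x]
        module
      have ta := (hTten ((2:ℝ) • x + y)).add (hTten ((2:ℝ) • x - y))
      have tb := ta.sub ((hTten (x + y)).const_smul (4:ℝ))
      have tc := tb.sub ((hTten (x - y)).const_smul (4:ℝ))
      have td := tc.sub ((hTten x).const_smul (24:ℝ))
      have t0 := td.add ((hTten y).const_smul (6:ℝ))
      have e2 : stmtQu T x y = T ((2:ℝ) • x + y) + T ((2:ℝ) • x - y)
          - (4:ℝ) • T (x + y) - (4:ℝ) • T (x - y) - (24:ℝ) • T x + (6:ℝ) • T y := rfl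
      rw [e2]
      exact Filter.Tendsto.congr (fun k => (e k).symm) t0
    have hzero : Filter.Tendsto (fun k : ℕ =>
        (16:ℝ) ^ k • stmtQu (stmtt f ν) (((2:ℝ) ^ k)⁻¹ • x) (((2:ℝ) ^ k)⁻¹ • y))
        Filter.atTop (nhds 0) := by
      apply squeeze_zero_norm (a := fun k : ℕ => (CT * M ^ (r + s)) * ((16:ℝ) / (2:ℝ) ^ (r + s)) ^ k)
      · intro k
        have hb := hQt (((2:ℝ) ^ k)⁻¹ • x) (((2:ℝ) ^ k)⁻¹ • y)
        have hnorms : ‖((2:ℝ) ^ k)⁻¹ • x‖ + ‖((2:ℝ) ^ k)⁻¹ • y‖ = ((2:ℝ) ^ k)⁻¹ * M := by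
          rw [norm_smul, norm_smul, Real.norm_eq_abs, abs_of_nonneg (by positivity), hM]
          ring
        rw [hnorms, Real.mul_rpow (by positivity) hM0, stmt_pow_inv] at hb
        rw [norm_smul, Real.norm_eq_abs, abs_of_nonneg (by positivity : (0:ℝ) ≤ (16:ℝ) ^ k)]
        calc (16:ℝ) ^ k * ‖stmtQu (stmtt f ν) (((2:ℝ) ^ k)⁻¹ • x) (((2:ℝ) ^ k)⁻¹ • y)‖
            ≤ (16:ℝ) ^ k * (CT * ((((2:ℝ) ^ (r+s)) ^ k)⁻¹ * M ^ (r + s))) :=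
              mul_le_mul_of_nonneg_left hb (by positivity)
          _ = (CT * M ^ (r + s)) * ((16:ℝ) / (2:ℝ) ^ (r + s)) ^ k := by
              rw [div_pow]
              field_simp
      · have hlt : (16:ℝ) / (2:ℝ) ^ (r + s) < 1 := (div_lt_one h2pp).mpr h2p16
        have := tendsto_pow_atTop_nhds_zero_of_lt_one (by positivity) hlt
        simpa using this.const_mul (CT * M ^ (r + s))
    exact tendsto_nhds_unique hcomb hzero
  have hTquart : ∀ x y : X, T ((2:ℤ) • x + y) + T ((2:ℤ) • x - y) =
      (4:ℤ) • T (x + y) + (4:ℤ) • T (x - y) + (24:ℤ) • T x - (6:ℤ) • T y := by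
    intro x y
    have h := hTQu x y
    rw [show ((2:ℤ) • x : X) = (2:ℝ) • x from by
      rw [← Int.cast_smul_eq_zsmul ℝ (2:ℤ) x]; norm_num]
    rw [Int.cast_smul_eq_zsmul ℝ (4:ℤ) (T (x+y)) |>.symm,
      Int.cast_smul_eq_zsmul ℝ (4:ℤ) (T (x-y)) |>.symm,
      Int.cast_smul_eq_zsmul ℝ (24:ℤ) (T x) |>.symm,
      Int.cast_smul_eq_zsmul ℝ (6:ℤ) (T y) |>.symm]
    push_cast
    have e : T ((2:ℝ) • x + y) + T ((2:ℝ) • x - y)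
        = stmtQu T x y + (4:ℝ) • T (x + y) + (4:ℝ) • T (x - y)
          + (24:ℝ) • T x - (6:ℝ) • T y := by
      simp only [stmtQu]; module
    rw [e, h]; module
  -- the approximation bound
  set K : ℝ := (Cq * (2:ℝ) ^ (r + s)) / ((2:ℝ) ^ (r + s) - 4)
    + ((2:ℝ)⁻¹ * CT) / ((2:ℝ) ^ (r + s) - 16) with hKdef
  have hKbound : ∀ x : X, ‖f x - Q x - T x‖ ≤ K * ‖x‖ ^ (r + s) := by
    intro x
    have e : f x - Q x - T x = (stmtq f ν x - Q x) + (stmtt f ν x - T x) := by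
      have hqt := stmt_qt_add (f := f) hνn x
      rw [← hqt]; module
    rw [e]
    refine (norm_add_le _ _).trans ?_
    have h1 := hQb x
    have h2 := hTb x
    rw [hKdef]
    have : ((Cq * (2:ℝ) ^ (r + s)) / ((2:ℝ) ^ (r + s) - 4)
        + ((2:ℝ)⁻¹ * CT) / ((2:ℝ) ^ (r + s) - 16)) * ‖x‖ ^ (r + s)
        = (Cq * (2:ℝ) ^ (r + s)) / ((2:ℝ) ^ (r + s) - 4) * ‖x‖ ^ (r + s)
          + ((2:ℝ)⁻¹ * CT) / ((2:ℝ) ^ (r + s) - 16) * ‖x‖ ^ (r + s) := by ring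
    rw [this]
    exact add_le_add h1 h2
  refine ⟨(Q, T), ⟨hQquad, hTquart, ⟨K, hKbound⟩⟩, ?_⟩
  -- uniqueness
  rintro ⟨Q', T'⟩ ⟨hq', ht', K', hK'⟩
  simp only at hq' ht' hK'
  have hQs := stmt_quad_scale Q hQquad
  have hQ's := stmt_quad_scale Q' hq'
  have hTs := stmt_quart_scale T hTquart
  have hT's := stmt_quart_scale T' ht'
  have key : ∀ x : X, ∀ k : ℕ,
      ‖(((4:ℝ) ^ k)⁻¹) • (Q x - Q' x) + (((16:ℝ) ^ k)⁻¹) • (T x - T' x)‖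
        ≤ (K + K') * ((((2:ℝ) ^ (r+s)) ^ k)⁻¹ * ‖x‖ ^ (r + s)) := by
    intro x k
    have h1 := hK' (((2:ℝ) ^ k)⁻¹ • x)
    have h2 := hKbound (((2:ℝ) ^ k)⁻¹ • x)
    have e : (((4:ℝ) ^ k)⁻¹) • (Q x - Q' x) + (((16:ℝ) ^ k)⁻¹) • (T x - T' x)
        = (f (((2:ℝ) ^ k)⁻¹ • x) - Q' (((2:ℝ) ^ k)⁻¹ • x) - T' (((2:ℝ) ^ k)⁻¹ • x))
          - (f (((2:ℝ) ^ k)⁻¹ • x) - Q (((2:ℝ) ^ k)⁻¹ • x) - T (((2:ℝ) ^ k)⁻¹ • x)) := by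
      rw [hQs k x, hQ's k x, hTs k x, hT's k x]
      module
    rw [e]
    refine (norm_sub_le _ _).trans ?_
    have hnx : ‖((2:ℝ) ^ k)⁻¹ • x‖ ^ (r + s) = (((2:ℝ) ^ (r+s)) ^ k)⁻¹ * ‖x‖ ^ (r + s) := by
      rw [norm_smul, Real.norm_eq_abs, abs_of_nonneg (by positivity),
        Real.mul_rpow (by positivity) (norm_nonneg x), stmt_pow_inv]
    rw [hnx] at h1 h2
    calc ‖f (((2:ℝ) ^ k)⁻¹ • x) - Q' (((2:ℝ) ^ k)⁻¹ • x) - T' (((2:ℝ) ^ k)⁻¹ • x)‖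
          + ‖f (((2:ℝ) ^ k)⁻¹ • x) - Q (((2:ℝ) ^ k)⁻¹ • x) - T (((2:ℝ) ^ k)⁻¹ • x)‖
        ≤ K' * ((((2:ℝ) ^ (r+s)) ^ k)⁻¹ * ‖x‖ ^ (r + s))
          + K * ((((2:ℝ) ^ (r+s)) ^ k)⁻¹ * ‖x‖ ^ (r + s)) := add_le_add h1 h2
      _ = (K + K') * ((((2:ℝ) ^ (r+s)) ^ k)⁻¹ * ‖x‖ ^ (r + s)) := by ring
  have hQeq : ∀ x : X, Q x = Q' x := by
    intro x
    set A : Y := Q x - Q' x with hA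
    set B : Y := T x - T' x with hB
    have hk : ∀ k : ℕ, ‖A + ((4:ℝ) ^ k * (((16:ℝ) ^ k)⁻¹)) • B‖
        ≤ ((K + K') * ‖x‖ ^ (r + s)) * ((4:ℝ) / (2:ℝ) ^ (r+s)) ^ k := by
      intro k
      have h1 := key x k
      have e2 : A + ((4:ℝ) ^ k * (((16:ℝ) ^ k)⁻¹)) • B
          = (4:ℝ) ^ k • ((((4:ℝ) ^ k)⁻¹) • A + (((16:ℝ) ^ k)⁻¹) • B) := by
        rw [smul_add, smul_smul, smul_smul,
          mul_inv_cancel₀ (by positivity : ((4:ℝ) ^ k) ≠ 0), one_smul]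
      rw [e2, norm_smul, Real.norm_eq_abs, abs_of_nonneg (by positivity : (0:ℝ) ≤ (4:ℝ) ^ k)]
      calc (4:ℝ) ^ k * ‖(((4:ℝ) ^ k)⁻¹) • A + (((16:ℝ) ^ k)⁻¹) • B‖
          ≤ (4:ℝ) ^ k * ((K + K') * ((((2:ℝ) ^ (r+s)) ^ k)⁻¹ * ‖x‖ ^ (r + s))) :=
            mul_le_mul_of_nonneg_left h1 (by positivity)
        _ = ((K + K') * ‖x‖ ^ (r + s)) * ((4:ℝ) / (2:ℝ) ^ (r+s)) ^ k := by
            rw [div_pow]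
            field_simp
    have hAB : Filter.Tendsto (fun k : ℕ => A + ((4:ℝ) ^ k * (((16:ℝ) ^ k)⁻¹)) • B)
        Filter.atTop (nhds A) := by
      have e3 : ∀ k : ℕ, (4:ℝ) ^ k * (((16:ℝ) ^ k)⁻¹) = ((1:ℝ)/4) ^ k := by
        intro k
        rw [div_pow, one_pow]
        rw [show ((16:ℝ) ^ k) = (4:ℝ) ^ k * (4:ℝ) ^ k from by
          rw [← mul_pow]; norm_num]
        field_simp
      have t1 : Filter.Tendsto (fun k : ℕ => ((1:ℝ)/4) ^ k) Filter.atTop (nhds 0) :=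
        tendsto_pow_atTop_nhds_zero_of_lt_one (by norm_num) (by norm_num)
      have t2 : Filter.Tendsto (fun k : ℕ => (4:ℝ) ^ k * (((16:ℝ) ^ k)⁻¹))
          Filter.atTop (nhds 0) := by
        exact Filter.Tendsto.congr (fun k => (e3 k).symm) t1
      have t3 := t2.smul_const B
      rw [zero_smul] at t3
      simpa using (tendsto_const_nhds :
        Filter.Tendsto (fun _ : ℕ => A) Filter.atTop (nhds A)).add t3
    have hzero : Filter.Tendsto (fun k : ℕ =>
        ((K + K') * ‖x‖ ^ (r + s)) * ((4:ℝ) / (2:ℝ) ^ (r+s)) ^ k) Filter.atTop (nhds 0) := by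
      have hlt : (4:ℝ) / (2:ℝ) ^ (r + s) < 1 := (div_lt_one h2pp).mpr h2p4
      have := tendsto_pow_atTop_nhds_zero_of_lt_one (by positivity) hlt
      simpa using this.const_mul ((K + K') * ‖x‖ ^ (r + s))
    have hlim0 := squeeze_zero_norm hk hzero
    have : A = 0 := tendsto_nhds_unique hAB hlim0
    rw [hA] at this
    exact sub_eq_zero.mp this
  have hTeq : ∀ x : X, T x = T' x := by
    intro x
    have hk : ∀ k : ℕ, ‖T x - T' x‖
        ≤ ((K + K') * ‖x‖ ^ (r + s)) * ((16:ℝ) / (2:ℝ) ^ (r+s)) ^ k := by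
      intro k
      have h1 := key x k
      rw [show Q x - Q' x = 0 from by rw [hQeq x]; exact sub_self _, smul_zero, zero_add,
        norm_smul, Real.norm_eq_abs, abs_of_nonneg (by positivity : (0:ℝ) ≤ ((16:ℝ) ^ k)⁻¹)]
        at h1
      have h2 : ‖T x - T' x‖ = (16:ℝ) ^ k * ((((16:ℝ) ^ k)⁻¹) * ‖T x - T' x‖) := by
        field_simp
      rw [h2]
      calc (16:ℝ) ^ k * ((((16:ℝ) ^ k)⁻¹) * ‖T x - T' x‖)
          ≤ (16:ℝ) ^ k * ((K + K') * ((((2:ℝ) ^ (r+s)) ^ k)⁻¹ * ‖x‖ ^ (r + s))) :=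
            mul_le_mul_of_nonneg_left h1 (by positivity)
        _ = ((K + K') * ‖x‖ ^ (r + s)) * ((16:ℝ) / (2:ℝ) ^ (r+s)) ^ k := by
            rw [div_pow]
            field_simp
    have hzero : Filter.Tendsto (fun k : ℕ =>
        ((K + K') * ‖x‖ ^ (r + s)) * ((16:ℝ) / (2:ℝ) ^ (r+s)) ^ k) Filter.atTop (nhds 0) := by
      have hlt : (16:ℝ) / (2:ℝ) ^ (r + s) < 1 := (div_lt_one h2pp).mpr h2p16
      have := tendsto_pow_atTop_nhds_zero_of_lt_one (by positivity) hlt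
      simpa using this.const_mul ((K + K') * ‖x‖ ^ (r + s))
    have hle : ‖T x - T' x‖ ≤ 0 :=
      le_of_tendsto_of_tendsto tendsto_const_nhds hzero
        (Filter.Eventually.of_forall hk)
    exact sub_eq_zero.mp (norm_le_zero_iff.mp hle)
  refine Prod.ext ?_ ?_
  · exact funext fun x => (hQeq x).symm
  · exact funext fun x => (hTeq x).symm
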